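/- arXiv:2512.21260 — 7 statements merged into one kernel-verified Lean document; each statement's English description precedes it below -/
import Mathlib

section
/- Let n, d be positive integers. In the algebra of complex square matrices indexed by (Fin n → Fin d) (representing operators on (ℂ^d)^{⊗n}), the ℂ-linear span of the set {A^{⊗n} : A ∈ Matrix (Fin d) (Fin d) ℂ} of n-th Kronecker powers is equal to the commutant of the set of permutation matrices {P_σ : σ ∈ Equiv.Perm (Fin n)}, i.e., a matrix lies in this span if and only if it commutes with P_σ for every σ. (Schur–Weyl duality, underlying the simultaneous irreducible decomposition of U^{⊗n} and π(σ) used throughout the paper.) -/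
open Matrix Finset

/-- The `n`-th Kronecker power of a `d × d` complex matrix, acting on `(ℂ^d)^{⊗n}`,
indexed by `Fin n → Fin d`. -/
noncomputable def kroneckerPower {d : ℕ} (n : ℕ) (A : Matrix (Fin d) (Fin d) ℂ) :
    Matrix (Fin n → Fin d) (Fin n → Fin d) ℂ :=
  fun f g => ∏ k : Fin n, A (f k) (g k)

/-- The permutation matrix on `(ℂ^d)^{⊗n}` permuting tensor factors according to `σ`. -/
noncomputable def permMatrix (n d : ℕ) (σ : Equiv.Perm (Fin n)) :
    Matrix (Fin n → Fin d) (Fin n → Fin d) ℂ :=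
  fun f g => if f = g ∘ ⇑σ⁻¹ then 1 else 0

lemma neg_one_pow_sub' (c t : ℕ) (h : t ≤ c) : (-1:ℂ)^(c - t) = (-1)^c * (-1)^t := by
  have h1 : (-1:ℂ)^c = (-1)^(c-t) * (-1)^t := by rw [← pow_add, Nat.sub_add_cancel h]
  have h2 : ((-1:ℂ)^t) * ((-1:ℂ)^t) = 1 := by
    rw [← pow_add, ← two_mul, pow_mul]; simp
  calc (-1:ℂ)^(c-t) = (-1)^(c-t) * ((-1)^t * (-1)^t) := by rw [h2, mul_one]
    _ = (-1)^c * (-1)^t := by rw [← mul_assoc, ← h1]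

lemma sum_superset_sign {n : ℕ} (B : Finset (Fin n)) :
    ∑ S ∈ (univ : Finset (Fin n)).powerset,
      (if B ⊆ S then (-1:ℂ)^(n - S.card) else 0) =
    if B = univ then 1 else 0 := by
  rw [← Finset.sum_filter]
  have key : ∑ S ∈ (univ : Finset (Fin n)).powerset.filter (fun S => B ⊆ S), (-1:ℂ)^(n - S.card)
      = ∑ T ∈ Bᶜ.powerset, (-1:ℂ)^(n - (B.card + T.card)) := by
    refine Finset.sum_bij' (fun S _ => S \ B) (fun T _ => B ∪ T) ?_ ?_ ?_ ?_ ?_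
    · intro S hS
      simp only [mem_filter, mem_powerset] at hS
      simp only [mem_powerset]
      intro x hx
      simp only [mem_sdiff] at hx
      exact Finset.mem_compl.mpr hx.2
    · intro T hT
      simp only [mem_filter, mem_powerset]
      exact ⟨subset_univ _, Finset.subset_union_left⟩
    · intro S hS
      simp only [mem_filter, mem_powerset] at hS
      exact Finset.union_sdiff_of_subset hS.2
    · intro T hT
      simp only [mem_powerset] at hT
      have hd : Disjoint B T := by
        refine Finset.disjoint_left.mpr (fun a ha haT => ?_)
        exact (Finset.mem_compl.mp (hT haT)) ha
      exact Finset.union_sdiff_cancel_left hd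
    · intro S hS
      simp only [mem_filter, mem_powerset] at hS
      congr 2
      rw [Finset.card_sdiff_of_subset hS.2]
      exact (Nat.add_sub_cancel' (Finset.card_le_card hS.2)).symm
  rw [key]
  have hcompl : ∀ T ∈ Bᶜ.powerset, (-1:ℂ)^(n - (B.card + T.card)) = (-1)^(Bᶜ.card) * (-1)^T.card := by
    intro T hT
    simp only [mem_powerset] at hT
    have hTc : T.card ≤ Bᶜ.card := Finset.card_le_card hT
    have hBc : Bᶜ.card = n - B.card := by
      rw [Finset.card_compl]; simp
    have h1 : n - (B.card + T.card) = Bᶜ.card - T.card := by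
      rw [hBc]; omega
    rw [h1, neg_one_pow_sub' _ _ hTc]
  rw [Finset.sum_congr rfl hcompl, ← Finset.mul_sum]
  have hz := congrArg (Int.cast : ℤ → ℂ) (Finset.sum_powerset_neg_one_pow_card (x := Bᶜ))
  push_cast at hz
  rw [hz]
  by_cases hB : B = univ
  · have : Bᶜ = ∅ := by rw [hB]; simp
    simp [hB, this]
  · have : Bᶜ ≠ ∅ := by
      intro h
      exact hB (by simpa [Finset.compl_eq_empty_iff] using h)
    simp [hB, this]

lemma polar {n : ℕ} (w : Fin n → Fin n → ℂ) :
    ∑ S ∈ (univ : Finset (Fin n)).powerset,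
        (-1:ℂ)^(n - S.card) * ∏ k, ∑ i ∈ S, w i k =
      ∑ σ : Equiv.Perm (Fin n), ∏ k, w (σ k) k := by
  have step1 : ∀ S : Finset (Fin n), ∏ k, ∑ i ∈ S, w i k
      = ∑ φ : Fin n → Fin n, if Finset.image φ univ ⊆ S then ∏ k, w (φ k) k else 0 := by
    intro S
    rw [Finset.prod_univ_sum (fun _ => S) (fun k i => w i k)]
    rw [← Finset.univ_inter (Fintype.piFinset fun _ => S), ← Finset.sum_ite_mem]
    refine Finset.sum_congr rfl (fun φ _ => ?_)
    congr 1
    simp [Fintype.mem_piFinset, Finset.image_subset_iff]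
  calc ∑ S ∈ (univ : Finset (Fin n)).powerset, (-1:ℂ)^(n - S.card) * ∏ k, ∑ i ∈ S, w i k
      = ∑ S ∈ (univ : Finset (Fin n)).powerset, ∑ φ : Fin n → Fin n,
          (if Finset.image φ univ ⊆ S then (-1:ℂ)^(n - S.card) else 0) * ∏ k, w (φ k) k := by
        refine Finset.sum_congr rfl (fun S _ => ?_)
        rw [step1 S, Finset.mul_sum]
        refine Finset.sum_congr rfl (fun φ _ => ?_)
        by_cases h : Finset.image φ univ ⊆ S <;> simp [h]
    _ = ∑ φ : Fin n → Fin n, (if Finset.image φ univ = univ then 1 else 0) * ∏ k, w (φ k) k := by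
        rw [Finset.sum_comm]
        refine Finset.sum_congr rfl (fun φ _ => ?_)
        rw [← Finset.sum_mul, sum_superset_sign]
    _ = ∑ φ ∈ (univ : Finset (Fin n → Fin n)).filter (fun φ => Finset.image φ univ = univ),
          ∏ k, w (φ k) k := by
        rw [Finset.sum_filter]
        refine Finset.sum_congr rfl (fun φ _ => ?_)
        by_cases h : Finset.image φ univ = univ <;> simp [h]
    _ = ∑ σ : Equiv.Perm (Fin n), ∏ k, w (σ k) k := by
        have hbij : ∀ φ ∈ (univ : Finset (Fin n → Fin n)).filter
            (fun φ => Finset.image φ univ = univ), Function.Bijective φ := by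
          intro φ hφ
          simp only [mem_filter, mem_univ, true_and] at hφ
          refine Finite.surjective_iff_bijective.mp (fun y => ?_)
          have : y ∈ Finset.image φ univ := by rw [hφ]; exact Finset.mem_univ y
          obtain ⟨x, _, hx⟩ := Finset.mem_image.mp this
          exact ⟨x, hx⟩
        refine Finset.sum_bij' (fun φ hφ => Equiv.ofBijective φ (hbij φ hφ))
          (fun σ _ => ⇑σ) (fun _ _ => Finset.mem_univ _) ?_ ?_ ?_ ?_
        · intro σ _
          simp only [mem_filter, mem_univ, true_and]
          ext y
          simp only [Finset.mem_image, Finset.mem_univ, true_and, iff_true]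
          exact ⟨σ.symm y, by simp⟩
        · intro φ hφ; rfl
        · intro σ _; exact Equiv.ext (fun x => rfl)
        · intro φ hφ; rfl

lemma mul_perm_apply {n d : ℕ} (X : Matrix (Fin n → Fin d) (Fin n → Fin d) ℂ)
    (σ : Equiv.Perm (Fin n)) (f g : Fin n → Fin d) :
    (X * permMatrix n d σ) f g = X f (g ∘ ⇑σ⁻¹) := by
  simp [Matrix.mul_apply, permMatrix, mul_ite, mul_one, mul_zero]

lemma perm_mul_apply {n d : ℕ} (X : Matrix (Fin n → Fin d) (Fin n → Fin d) ℂ)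
    (σ : Equiv.Perm (Fin n)) (f g : Fin n → Fin d) :
    (permMatrix n d σ * X) f g = X (f ∘ ⇑σ) g := by
  rw [Matrix.mul_apply]
  have key : ∀ h : Fin n → Fin d, permMatrix n d σ f h * X h g
      = (if h = f ∘ ⇑σ then X h g else 0) := by
    intro h
    by_cases hh : h = f ∘ ⇑σ
    · subst hh
      have hf : f = (f ∘ ⇑σ) ∘ ⇑σ⁻¹ := by funext k; simp
      simp only [permMatrix, if_pos hf]; simp
    · have hnf : ¬ (f = h ∘ ⇑σ⁻¹) := by
        intro he
        apply hh
        funext k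
        have := congrFun he (σ k)
        simp at this
        simp [this]
      simp only [permMatrix, if_neg hnf]; simp [hh]
  rw [Finset.sum_congr rfl (fun h _ => key h), Finset.sum_ite_eq']
  simp

noncomputable def Amat {n d : ℕ} (f₀ g₀ : Fin n → Fin d) (S : Finset (Fin n)) :
    Matrix (Fin d) (Fin d) ℂ :=
  fun p q => ∑ i ∈ S, if p = f₀ i ∧ q = g₀ i then 1 else 0

noncomputable def Esym {n d : ℕ} (f₀ g₀ : Fin n → Fin d) (σ : Equiv.Perm (Fin n)) :
    Matrix (Fin n → Fin d) (Fin n → Fin d) ℂ :=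
  fun f g => if f = f₀ ∘ ⇑σ ∧ g = g₀ ∘ ⇑σ then 1 else 0

lemma claim1 (n d : ℕ) (f₀ g₀ : Fin n → Fin d) :
    ∑ S ∈ (univ : Finset (Fin n)).powerset,
      ((-1:ℂ)^(n - S.card)) • kroneckerPower n (Amat f₀ g₀ S)
    = ∑ σ : Equiv.Perm (Fin n), Esym f₀ g₀ σ := by
  ext f g
  rw [Matrix.sum_apply, Matrix.sum_apply]
  simp only [Matrix.smul_apply, smul_eq_mul, kroneckerPower, Amat, Esym]
  rw [polar (fun i k => if f k = f₀ i ∧ g k = g₀ i then (1:ℂ) else 0)]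
  refine Finset.sum_congr rfl (fun σ _ => ?_)
  rw [Finset.prod_boole]
  simp only [Finset.mem_univ, forall_const]
  congr 1
  simp [funext_iff, forall_and]

lemma claim2 (n d : ℕ) (X : Matrix (Fin n → Fin d) (Fin n → Fin d) ℂ)
    (hinv : ∀ (σ : Equiv.Perm (Fin n)) (f g : Fin n → Fin d), X (f ∘ ⇑σ) (g ∘ ⇑σ) = X f g) :
    (((Nat.factorial n) : ℂ)) • X = ∑ f₀ : Fin n → Fin d, ∑ g₀ : Fin n → Fin d,
      X f₀ g₀ • ∑ σ : Equiv.Perm (Fin n), Esym f₀ g₀ σ := by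
  ext f g
  simp only [Matrix.smul_apply, Matrix.sum_apply, smul_eq_mul]
  have key : ∀ σ : Equiv.Perm (Fin n),
      ∑ f₀ : Fin n → Fin d, ∑ g₀ : Fin n → Fin d, X f₀ g₀ * Esym f₀ g₀ σ f g = X f g := by
    intro σ
    have h1 : ∀ f₀ g₀ : Fin n → Fin d,
        Esym f₀ g₀ σ f g = if f₀ = f ∘ ⇑σ⁻¹ ∧ g₀ = g ∘ ⇑σ⁻¹ then 1 else 0 := by
      intro f₀ g₀
      have hf : (f = f₀ ∘ ⇑σ) ↔ (f₀ = f ∘ ⇑σ⁻¹) :=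
        ⟨fun h => by rw [h]; funext k; simp, fun h => by rw [h]; funext k; simp⟩
      have hg : (g = g₀ ∘ ⇑σ) ↔ (g₀ = g ∘ ⇑σ⁻¹) :=
        ⟨fun h => by rw [h]; funext k; simp, fun h => by rw [h]; funext k; simp⟩
      exact if_congr (and_congr hf hg) rfl rfl
    simp only [h1, ite_and, mul_ite, mul_one, mul_zero]
    have h2 : ∀ f₀ : Fin n → Fin d,
        (∑ g₀ : Fin n → Fin d, if f₀ = f ∘ ⇑σ⁻¹ then if g₀ = g ∘ ⇑σ⁻¹ then X f₀ g₀ else 0 else 0)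
          = if f₀ = f ∘ ⇑σ⁻¹ then X f₀ (g ∘ ⇑σ⁻¹) else 0 := by
      intro f₀; by_cases h : f₀ = f ∘ ⇑σ⁻¹ <;> simp [h]
    rw [Finset.sum_congr rfl (fun f₀ _ => h2 f₀),
      Finset.sum_ite_eq' Finset.univ (f ∘ ⇑σ⁻¹) (fun f₀ => X f₀ (g ∘ ⇑σ⁻¹))]
    simp only [Finset.mem_univ, if_true]
    exact hinv σ⁻¹ f g
  symm
  calc ∑ f₀ : Fin n → Fin d, ∑ g₀ : Fin n → Fin d,
        X f₀ g₀ * ∑ σ : Equiv.Perm (Fin n), Esym f₀ g₀ σ f g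
      = ∑ σ : Equiv.Perm (Fin n), ∑ f₀ : Fin n → Fin d, ∑ g₀ : Fin n → Fin d,
          X f₀ g₀ * Esym f₀ g₀ σ f g := by
        simp_rw [Finset.mul_sum]
        rw [Finset.sum_congr rfl (fun f₀ _ => Finset.sum_comm (s := Finset.univ)
            (t := Finset.univ) (f := fun g₀ σ => X f₀ g₀ * Esym f₀ g₀ σ f g))]
        exact Finset.sum_comm
    _ = ∑ _σ : Equiv.Perm (Fin n), X f g := Finset.sum_congr rfl (fun σ _ => key σ)
    _ = ((Nat.factorial n) : ℂ) * X f g := by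
        rw [Finset.sum_const, Finset.card_univ, Fintype.card_perm, Fintype.card_fin,
          nsmul_eq_mul]

lemma kron_commute {n d : ℕ} (A : Matrix (Fin d) (Fin d) ℂ) (σ : Equiv.Perm (Fin n)) :
    kroneckerPower n A * permMatrix n d σ = permMatrix n d σ * kroneckerPower n A := by
  ext f g
  rw [mul_perm_apply, perm_mul_apply]
  show ∏ k, A (f k) ((g ∘ ⇑σ⁻¹) k) = ∏ k, A ((f ∘ ⇑σ) k) (g k)
  rw [← Equiv.prod_comp σ⁻¹ (fun j => A ((f ∘ ⇑σ) j) (g j))]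
  exact Finset.prod_congr rfl (fun k _ => by simp)

/-- Schur–Weyl duality: the span of `n`-th Kronecker powers equals the commutant of the
permutation matrices. -/
theorem stmt0 (n d : ℕ) (hn : 0 < n) (hd : 0 < d) :
    (Submodule.span ℂ {M : Matrix (Fin n → Fin d) (Fin n → Fin d) ℂ |
        ∃ A : Matrix (Fin d) (Fin d) ℂ, M = kroneckerPower n A} : Set _) =
      {X : Matrix (Fin n → Fin d) (Fin n → Fin d) ℂ |
        ∀ σ : Equiv.Perm (Fin n), X * permMatrix n d σ = permMatrix n d σ * X} := by
  ext X
  simp only [SetLike.mem_coe, Set.mem_setOf_eq]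
  constructor
  · intro hX σ
    induction hX using Submodule.span_induction with
    | mem M hM => obtain ⟨A, rfl⟩ := hM; exact kron_commute A σ
    | zero => simp
    | add M N _ _ hM hN => rw [add_mul, mul_add, hM, hN]
    | smul c M _ hM => rw [smul_mul_assoc, mul_smul_comm, hM]
  · intro hX
    have hrel : ∀ (σ : Equiv.Perm (Fin n)) (f g : Fin n → Fin d),
        X f (g ∘ ⇑σ⁻¹) = X (f ∘ ⇑σ) g := by
      intro σ f g
      have := Matrix.ext_iff.mpr (hX σ) f g
      rwa [mul_perm_apply, perm_mul_apply] at this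
    have hinv : ∀ (σ : Equiv.Perm (Fin n)) (f g : Fin n → Fin d),
        X (f ∘ ⇑σ) (g ∘ ⇑σ) = X f g := by
      intro σ f g
      have h := hrel σ f (g ∘ ⇑σ)
      rw [show (g ∘ ⇑σ) ∘ ⇑σ⁻¹ = g from by funext k; simp] at h
      exact h.symm
    have hfact : ((Nat.factorial n) : ℂ) ≠ 0 := Nat.cast_ne_zero.mpr (Nat.factorial_ne_zero n)
    have hXeq : X = (((Nat.factorial n) : ℂ))⁻¹ • (((Nat.factorial n) : ℂ) • X) := by
      rw [smul_smul, inv_mul_cancel₀ hfact, one_smul]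
    rw [hXeq, claim2 n d X hinv]
    refine Submodule.smul_mem _ _ (Submodule.sum_mem _ (fun f₀ _ =>
      Submodule.sum_mem _ (fun g₀ _ => Submodule.smul_mem _ _ ?_)))
    rw [← claim1]
    exact Submodule.sum_mem _ (fun S _ => Submodule.smul_mem _ _
      (Submodule.subset_span ⟨Amat f₀ g₀ S, rfl⟩))
end

section
/- Let n, d be positive integers. In the algebra of complex square matrices indexed by (Fin n → Fin d), the ℂ-linear span of the permutation matrices {P_σ : σ ∈ Equiv.Perm (Fin n)} is equal to the commutant of the set {U^{⊗n} : U ∈ unitaryGroup (Fin d) ℂ} of n-th Kronecker powers of unitary matrices, i.e., a matrix commutes with U^{⊗n} for every unitary U if and only if it is a ℂ-linear combination of permutation matrices. (Dual direction of Schur–Weyl duality.) -/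
open Matrix

namespace SW

variable {n d : ℕ}

lemma eq_comp_iff (f h : Fin n → Fin d) (σ : Equiv.Perm (Fin n)) :
    f = h ∘ ⇑σ⁻¹ ↔ h = f ∘ ⇑σ := by
  constructor <;> intro he <;> ext k <;> simp [he]

lemma permMatrix_mul_apply (σ : Equiv.Perm (Fin n))
    (M : Matrix (Fin n → Fin d) (Fin n → Fin d) ℂ) (f g : Fin n → Fin d) :
    (permMatrix n d σ * M) f g = M (f ∘ ⇑σ) g := by
  rw [Matrix.mul_apply]
  have : ∀ h, permMatrix n d σ f h = if h = f ∘ ⇑σ then 1 else 0 := by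
    intro h; simp only [permMatrix, eq_comp_iff]
  simp only [this, ite_mul, one_mul, zero_mul]
  simp

lemma mul_permMatrix_apply (σ : Equiv.Perm (Fin n))
    (M : Matrix (Fin n → Fin d) (Fin n → Fin d) ℂ) (f g : Fin n → Fin d) :
    (M * permMatrix n d σ) f g = M f (g ∘ ⇑σ⁻¹) := by
  rw [Matrix.mul_apply]
  have : ∀ h, permMatrix n d σ h g = if h = g ∘ ⇑σ⁻¹ then 1 else 0 := fun h => rfl
  simp only [this, mul_ite, mul_one, mul_zero]
  simp

lemma permMatrix_mul (σ τ : Equiv.Perm (Fin n)) :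
    permMatrix n d σ * permMatrix n d τ = permMatrix n d (σ * τ) := by
  ext f g
  rw [permMatrix_mul_apply]
  simp only [permMatrix]
  congr 1
  simp only [eq_iff_iff]
  constructor <;> intro he
  · funext k
    have := congrFun he (σ⁻¹ k)
    simpa [Function.comp] using this
  · funext k
    have := congrFun he (σ k)
    simpa [Function.comp] using this

lemma permMatrix_one : permMatrix n d 1 = (1 : Matrix (Fin n → Fin d) (Fin n → Fin d) ℂ) := by
  ext f g
  simp [permMatrix, Matrix.one_apply, eq_comm]

lemma permMatrix_conjTranspose (σ : Equiv.Perm (Fin n)) :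
    (permMatrix n d σ)ᴴ = permMatrix n d σ⁻¹ := by
  ext f g
  simp only [Matrix.conjTranspose_apply, permMatrix]
  have : (g = f ∘ ⇑σ⁻¹) ↔ (f = g ∘ ⇑σ⁻¹⁻¹) := by
    rw [inv_inv]; exact eq_comp_iff g f σ
  rw [if_congr this rfl rfl]
  split <;> simp

lemma permMatrix_commute_kroneckerPower (σ : Equiv.Perm (Fin n)) (A : Matrix (Fin d) (Fin d) ℂ) :
    permMatrix n d σ * kroneckerPower n A = kroneckerPower n A * permMatrix n d σ := by
  ext f g
  rw [permMatrix_mul_apply, mul_permMatrix_apply]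
  simp only [kroneckerPower, Function.comp]
  rw [← Equiv.prod_comp σ (fun k => A (f k) (g (σ⁻¹ k)))]
  simp


/-- Slot-wise tensor product of `n` matrices. -/
noncomputable def tensorProd (B : Fin n → Matrix (Fin d) (Fin d) ℂ) :
    Matrix (Fin n → Fin d) (Fin n → Fin d) ℂ :=
  fun f g => ∏ k : Fin n, B k (f k) (g k)

/-- Elementary matrix unit. -/
def unitM (i j : Fin d) : Matrix (Fin d) (Fin d) ℂ :=
  fun a b => if a = i ∧ b = j then 1 else 0

lemma counting (R : Finset (Fin n)) :
    (∑ S ∈ (Finset.univ : Finset (Fin n)).powerset,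
      if R ⊆ S then ((-1 : ℂ)) ^ (n - S.card) else 0)
      = if R = Finset.univ then 1 else 0 := by
  classical
  rw [← Finset.sum_filter]
  have hstep : ∑ S ∈ (Finset.univ : Finset (Fin n)).powerset.filter (fun S => R ⊆ S),
      ((-1 : ℂ)) ^ (n - S.card)
      = ∑ T ∈ Rᶜ.powerset, ((-1 : ℂ)) ^ (Rᶜ.card - T.card) := by
    refine Finset.sum_bij' (fun S _ => S \ R) (fun T _ => R ∪ T) ?_ ?_ ?_ ?_ ?_
    · intro S hS
      rw [Finset.mem_powerset]
      intro x hx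
      rw [Finset.mem_compl]
      exact (Finset.mem_sdiff.mp hx).2
    · intro T hT
      simp only [Finset.mem_filter, Finset.mem_powerset]
      exact ⟨Finset.subset_univ _, Finset.subset_union_left⟩
    · intro S hS
      simp only [Finset.mem_filter] at hS
      exact Finset.union_sdiff_of_subset hS.2
    · intro T hT
      rw [Finset.mem_powerset] at hT
      have hdisj : Disjoint R T := by
        rw [Finset.disjoint_left]
        intro a ha haT
        exact (Finset.mem_compl.mp (hT haT)) ha
      exact Finset.union_sdiff_cancel_left hdisj
    · intro S hS
      simp only [Finset.mem_filter, Finset.mem_powerset] at hS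
      congr 1
      have h1 : (S \ R).card + R.card = S.card := Finset.card_sdiff_add_card_eq_card hS.2
      have h2 : Rᶜ.card = n - R.card := by
        rw [Finset.card_compl]; simp
      have h3 : S.card ≤ n := by
        have := Finset.card_le_card (Finset.subset_univ S); simpa using this
      have h4 : R.card ≤ n := by
        have := Finset.card_le_card (Finset.subset_univ R); simpa using this
      omega
  rw [hstep]
  have h2 : ∀ T ∈ Rᶜ.powerset, ((-1 : ℂ)) ^ (Rᶜ.card - T.card)
      = ((-1 : ℂ)) ^ Rᶜ.card * ((-1 : ℂ)) ^ T.card := by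
    intro T hT
    have ht : T.card ≤ Rᶜ.card := Finset.card_le_card (Finset.mem_powerset.mp hT)
    have hone : ((-1 : ℂ)) ^ T.card * ((-1 : ℂ)) ^ T.card = 1 := by
      rw [← pow_add, ← two_mul, pow_mul]; norm_num
    calc ((-1 : ℂ)) ^ (Rᶜ.card - T.card)
        = ((-1 : ℂ)) ^ (Rᶜ.card - T.card) * (((-1 : ℂ)) ^ T.card * ((-1 : ℂ)) ^ T.card) := by
          rw [hone, mul_one]
      _ = (((-1 : ℂ)) ^ (Rᶜ.card - T.card) * ((-1 : ℂ)) ^ T.card) * ((-1 : ℂ)) ^ T.card := by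
          ring
      _ = ((-1 : ℂ)) ^ Rᶜ.card * ((-1 : ℂ)) ^ T.card := by
          rw [← pow_add, Nat.sub_add_cancel ht]
  rw [Finset.sum_congr rfl h2, ← Finset.mul_sum]
  have h3 : (∑ T ∈ Rᶜ.powerset, ((-1 : ℂ)) ^ T.card)
      = if Rᶜ = ∅ then 1 else 0 := by
    have hint := Finset.sum_powerset_neg_one_pow_card (x := Rᶜ)
    have h4 : (∑ T ∈ Rᶜ.powerset, ((-1 : ℂ)) ^ T.card)
        = (((∑ T ∈ Rᶜ.powerset, ((-1 : ℤ)) ^ T.card) : ℤ) : ℂ) := by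
      push_cast
      rfl
    rw [h4, hint]
    split <;> simp
  rw [h3]
  by_cases hR : R = Finset.univ
  · have : Rᶜ = ∅ := by simp [hR]
    simp [hR, this]
  · have : Rᶜ ≠ ∅ := by
      intro h
      exact hR (by simpa [Finset.compl_eq_empty_iff] using h)
    simp [hR, this]


lemma sym_eq (hn : 0 < n) (B : Fin n → Matrix (Fin d) (Fin d) ℂ) :
    (∑ σ : Equiv.Perm (Fin n), tensorProd (fun k => B (σ k)))
      = ∑ S ∈ (Finset.univ : Finset (Fin n)).powerset,
        ((-1 : ℂ)) ^ (n - S.card) • kroneckerPower n (∑ i ∈ S, B i) := by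
  classical
  ext f g
  simp only [Matrix.sum_apply, Matrix.smul_apply, smul_eq_mul, tensorProd, kroneckerPower]
  have hPi : ∀ S : Finset (Fin n), Fintype.piFinset (fun _ : Fin n => S)
      = Finset.univ.filter (fun h : Fin n → Fin n => ∀ k, h k ∈ S) := by
    intro S; ext h; simp [Fintype.mem_piFinset]
  have him : ∀ h : Fin n → Fin n,
      (Finset.image h Finset.univ = Finset.univ) ↔ Function.Surjective h := by
    intro h
    constructor
    · intro hi y
      have : y ∈ Finset.image h Finset.univ := by rw [hi]; exact Finset.mem_univ y
      obtain ⟨x, _, hx⟩ := Finset.mem_image.mp this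
      exact ⟨x, hx⟩
    · intro hs
      refine Finset.eq_univ_iff_forall.mpr fun y => ?_
      obtain ⟨x, hx⟩ := hs y
      exact Finset.mem_image.mpr ⟨x, Finset.mem_univ _, hx⟩
  calc (∑ σ : Equiv.Perm (Fin n), ∏ k : Fin n, B (σ k) (f k) (g k))
      = ∑ h ∈ Finset.univ.filter (fun h : Fin n → Fin n => Function.Surjective h),
          ∏ k : Fin n, B (h k) (f k) (g k) := by
        refine (Finset.sum_bij' (fun (h : Fin n → Fin n) hh => Equiv.ofBijective h
          ((Fintype.bijective_iff_surjective_and_card h).mpr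
            ⟨(Finset.mem_filter.mp hh).2, rfl⟩))
          (fun (σ : Equiv.Perm (Fin n)) _ => ⇑σ) ?_ ?_ ?_ ?_ ?_).symm
        · intro h hh; exact Finset.mem_univ _
        · intro σ _
          simp only [Finset.mem_filter, Finset.mem_univ, true_and]
          exact σ.surjective
        · intro h hh; rfl
        · intro σ _; exact Equiv.ext fun x => rfl
        · intro h hh; rfl
    _ = ∑ h : Fin n → Fin n,
          if Function.Surjective h then ∏ k : Fin n, B (h k) (f k) (g k) else 0 := by
        rw [Finset.sum_filter]
    _ = ∑ h : Fin n → Fin n,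
          ∑ S ∈ (Finset.univ : Finset (Fin n)).powerset,
            (if Finset.image h Finset.univ ⊆ S then ((-1 : ℂ)) ^ (n - S.card) else 0)
            * ∏ k : Fin n, B (h k) (f k) (g k) := by
        refine Finset.sum_congr rfl fun h _ => ?_
        rw [← Finset.sum_mul, counting, ite_mul, one_mul, zero_mul]
        exact if_congr (him h).symm rfl rfl
    _ = ∑ S ∈ (Finset.univ : Finset (Fin n)).powerset,
          ∑ h : Fin n → Fin n,
            (if Finset.image h Finset.univ ⊆ S then ((-1 : ℂ)) ^ (n - S.card) else 0)
            * ∏ k : Fin n, B (h k) (f k) (g k) := Finset.sum_comm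
    _ = ∑ S ∈ (Finset.univ : Finset (Fin n)).powerset,
          ((-1 : ℂ)) ^ (n - S.card) * ∏ k : Fin n, ∑ i ∈ S, B i (f k) (g k) := by
        refine Finset.sum_congr rfl fun S _ => ?_
        rw [Finset.prod_univ_sum, hPi S, Finset.sum_filter, Finset.mul_sum]
        refine Finset.sum_congr rfl fun h _ => ?_
        simp only [Finset.image_subset_iff, Finset.mem_univ, true_implies]
        split <;> ring

lemma sym_mem_span (hn : 0 < n) (B : Fin n → Matrix (Fin d) (Fin d) ℂ) :
    (∑ σ : Equiv.Perm (Fin n), tensorProd (fun k => B (σ k)))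
      ∈ Submodule.span ℂ {M : Matrix (Fin n → Fin d) (Fin n → Fin d) ℂ |
          ∃ A, M = kroneckerPower n A} := by
  rw [sym_eq hn B]
  exact Submodule.sum_mem _ fun S _ =>
    Submodule.smul_mem _ _ (Submodule.subset_span ⟨_, rfl⟩)

lemma conj_tensorProd (σ : Equiv.Perm (Fin n)) (B : Fin n → Matrix (Fin d) (Fin d) ℂ) :
    permMatrix n d σ * tensorProd B * permMatrix n d σ⁻¹
      = tensorProd (fun k => B (σ⁻¹ k)) := by
  ext f g
  rw [mul_permMatrix_apply, permMatrix_mul_apply]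
  simp only [inv_inv, tensorProd]
  rw [← Equiv.prod_comp σ (fun k => B (σ⁻¹ k) (f k) (g k))]
  simp [Function.comp]

lemma unit_tensor_apply (f g h h' : Fin n → Fin d) :
    tensorProd (fun k => unitM (f k) (g k)) h h'
      = if h = f ∧ h' = g then 1 else 0 := by
  classical
  simp only [tensorProd, unitM]
  rw [Fintype.prod_boole]
  have : (∀ k, h k = f k ∧ h' k = g k) ↔ (h = f ∧ h' = g) := by
    rw [forall_and, funext_iff, funext_iff]
  simp only [this]

lemma matrix_eq_sum_units (Y : Matrix (Fin n → Fin d) (Fin n → Fin d) ℂ) :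
    Y = ∑ p : (Fin n → Fin d) × (Fin n → Fin d),
      Y p.1 p.2 • tensorProd (fun k => unitM (p.1 k) (p.2 k)) := by
  classical
  ext h h'
  simp only [Matrix.sum_apply, Matrix.smul_apply, unit_tensor_apply, smul_eq_mul]
  rw [Finset.sum_eq_single (h, h')]
  · simp
  · rintro ⟨f, g⟩ _ hne
    have : ¬(h = f ∧ h' = g) := by
      rintro ⟨rfl, rfl⟩; exact hne rfl
    simp [this]
  · intro habs; exact absurd (Finset.mem_univ _) habs

set_option maxHeartbeats 1000000 in
lemma mem_kpSpan_of_perm_comm (hn : 0 < n)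
    (Y : Matrix (Fin n → Fin d) (Fin n → Fin d) ℂ)
    (hY : ∀ σ : Equiv.Perm (Fin n), permMatrix n d σ * Y = Y * permMatrix n d σ) :
    Y ∈ Submodule.span ℂ {M : Matrix (Fin n → Fin d) (Fin n → Fin d) ℂ |
        ∃ A, M = kroneckerPower n A} := by
  classical
  set c := (Fintype.card (Equiv.Perm (Fin n)) : ℂ) with hcdef
  have hc : c ≠ 0 := Nat.cast_ne_zero.mpr Fintype.card_ne_zero
  have hconj : ∀ σ : Equiv.Perm (Fin n),
      permMatrix n d σ * Y * permMatrix n d σ⁻¹ = Y := by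
    intro σ
    rw [hY σ, mul_assoc, permMatrix_mul]
    simp [permMatrix_one]
  have key : Y = c⁻¹ • ∑ σ : Equiv.Perm (Fin n),
      permMatrix n d σ * Y * permMatrix n d σ⁻¹ := by
    simp only [hconj]
    rw [Finset.sum_const, Finset.card_univ, ← Nat.cast_smul_eq_nsmul ℂ, smul_smul,
      ← hcdef, inv_mul_cancel₀ hc, one_smul]
  have key2 : Y = c⁻¹ • ∑ p : (Fin n → Fin d) × (Fin n → Fin d),
      Y p.1 p.2 • ∑ σ : Equiv.Perm (Fin n),
        tensorProd (fun k => unitM (p.1 (σ k)) (p.2 (σ k))) := by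
    conv_lhs => rw [key]
    congr 1
    calc (∑ σ : Equiv.Perm (Fin n), permMatrix n d σ * Y * permMatrix n d σ⁻¹)
        = ∑ σ : Equiv.Perm (Fin n), ∑ p : (Fin n → Fin d) × (Fin n → Fin d),
            Y p.1 p.2 • tensorProd (fun k => unitM (p.1 (σ⁻¹ k)) (p.2 (σ⁻¹ k))) := by
          refine Finset.sum_congr rfl fun σ _ => ?_
          conv_lhs => rw [matrix_eq_sum_units Y]
          rw [Finset.mul_sum, Finset.sum_mul]
          refine Finset.sum_congr rfl fun p _ => ?_
          rw [mul_smul_comm, smul_mul_assoc, conj_tensorProd]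
      _ = ∑ p : (Fin n → Fin d) × (Fin n → Fin d),
            Y p.1 p.2 • ∑ σ : Equiv.Perm (Fin n),
              tensorProd (fun k => unitM (p.1 (σ k)) (p.2 (σ k))) := by
          rw [Finset.sum_comm]
          refine Finset.sum_congr rfl fun p _ => ?_
          rw [Finset.smul_sum]
          exact Equiv.sum_comp (Equiv.inv (Equiv.Perm (Fin n)))
            (fun σ => Y p.1 p.2 • tensorProd (fun k => unitM (p.1 (σ k)) (p.2 (σ k))))
  rw [key2]
  refine Submodule.smul_mem _ _ (Submodule.sum_mem _ fun p _ => Submodule.smul_mem _ _ ?_)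
  exact sym_mem_span hn (fun j => unitM (p.1 j) (p.2 j))



section DCT

variable {K : Type*} [Fintype K] [DecidableEq K]

open scoped InnerProductSpace

lemma cyclic (S : Submodule ℂ (Matrix K K ℂ)) (h1 : (1 : Matrix K K ℂ) ∈ S)
    (hmul : ∀ a ∈ S, ∀ b ∈ S, a * b ∈ S) (hstar : ∀ a ∈ S, aᴴ ∈ S)
    (X : Matrix K K ℂ) (hX : ∀ Y : Matrix K K ℂ, (∀ b ∈ S, b * Y = Y * b) → X * Y = Y * X)
    (v : K → ℂ) : ∃ b ∈ S, X *ᵥ v = b *ᵥ v := by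
  classical
  let E := EuclideanSpace ℂ K
  let toV : E → (K → ℂ) := fun x => x
  let fromV : (K → ℂ) → E := fun x => WithLp.toLp 2 x
  let L : Matrix K K ℂ →ₗ[ℂ] E :=
    { toFun := fun b => fromV (b *ᵥ v)
      map_add' := fun a b => by
        show fromV ((a + b) *ᵥ v) = fromV (a *ᵥ v) + fromV (b *ᵥ v)
        rw [Matrix.add_mulVec]
        rfl
      map_smul' := fun c a => by
        show fromV ((c • a) *ᵥ v) = c • fromV (a *ᵥ v)
        rw [Matrix.smul_mulVec]
        rfl }
  let W : Submodule ℂ E := S.map L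
  have hinner : ∀ (x y : E), ⟪x, y⟫_ℂ = dotProduct (star (toV x)) (toV y) :=
    fun x y => (EuclideanSpace.inner_eq_star_dotProduct x y).trans (dotProduct_comm _ _)
  have hbW : ∀ b ∈ S, ∀ x ∈ W, fromV (b *ᵥ toV x) ∈ W := by
    intro b hb x hx
    obtain ⟨c, hc, rfl⟩ := hx
    refine ⟨b * c, hmul b hb c hc, ?_⟩
    show fromV ((b * c) *ᵥ v) = fromV (b *ᵥ (c *ᵥ v))
    rw [Matrix.mulVec_mulVec]
  have hbWperp : ∀ b ∈ S, ∀ x ∈ Wᗮ, fromV (b *ᵥ toV x) ∈ Wᗮ := by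
    intro b hb x hx
    rw [Submodule.mem_orthogonal] at hx ⊢
    intro u hu
    have h2 : fromV (bᴴ *ᵥ toV u) ∈ W := hbW bᴴ (hstar b hb) u hu
    have h3 := hx _ h2
    rw [hinner] at h3 ⊢
    have h4 : star (toV (fromV (bᴴ *ᵥ toV u))) = star (toV u) ᵥ* b := by
      show star (bᴴ *ᵥ toV u) = star (toV u) ᵥ* b
      rw [Matrix.star_mulVec, Matrix.conjTranspose_conjTranspose]
    rw [h4] at h3
    show dotProduct (star (toV u)) (b *ᵥ toV x) = 0
    rw [Matrix.dotProduct_mulVec]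
    exact h3
  let pr : E → E := fun x => ↑(W.orthogonalProjectionOnto x)
  have hpr_mem : ∀ x : E, pr x ∈ W := fun x => SetLike.coe_mem _
  have hpr_of_mem : ∀ x ∈ W, pr x = x := fun x hx => W.starProjection_eq_self_iff.mpr hx
  have hpr_perp : ∀ x ∈ Wᗮ, pr x = 0 := by
    intro x hx
    show (↑(W.orthogonalProjectionOnto x) : E) = 0
    rw [Submodule.orthogonalProjectionOnto_apply_of_mem_orthogonal hx]
    rfl
  have hpr_add : ∀ x y : E, pr (x + y) = pr x + pr y := by
    intro x y
    show (↑(W.orthogonalProjectionOnto (x + y)) : E) = _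
    rw [map_add]
    rfl
  have hsub_perp : ∀ x : E, x - pr x ∈ Wᗮ := fun x => W.sub_starProjection_mem_orthogonal x
  have hcomm : ∀ b ∈ S, ∀ x : E, pr (fromV (b *ᵥ toV x)) = fromV (b *ᵥ toV (pr x)) := by
    intro b hb x
    have hdecomp : fromV (b *ᵥ toV x)
        = fromV (b *ᵥ toV (pr x)) + fromV (b *ᵥ toV (x - pr x)) := by
      show fromV (b *ᵥ toV x) = fromV (b *ᵥ toV (pr x) + b *ᵥ toV (x - pr x))
      rw [← Matrix.mulVec_add]
      have : toV x = toV (pr x) + toV (x - pr x) := by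
        show x.ofLp = (pr x).ofLp + (x - pr x).ofLp
        rw [← WithLp.ofLp_add, add_sub_cancel]
      rw [this]
    rw [hdecomp, hpr_add, hpr_of_mem _ (hbW b hb _ (hpr_mem x)),
      hpr_perp _ (hbWperp b hb _ (hsub_perp x)), add_zero]
  let plin : (K → ℂ) →ₗ[ℂ] (K → ℂ) :=
    { toFun := fun x => toV (pr (fromV x))
      map_add' := fun x y => by
        show toV (pr (fromV x + fromV y)) = toV (pr (fromV x)) + toV (pr (fromV y))
        rw [hpr_add]
        rfl
      map_smul' := fun c x => by
        show toV ((W.orthogonalProjectionOnto (c • fromV x) : E)) = c • toV (pr (fromV x))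
        rw [_root_.map_smul (W.orthogonalProjectionOnto) c (fromV x)]
        rfl }
  let Yp : Matrix K K ℂ := LinearMap.toMatrix' plin
  have hYp_apply : ∀ x : K → ℂ, Yp *ᵥ x = plin x := by
    intro x
    calc Yp *ᵥ x = Matrix.toLin' Yp x := (Matrix.toLin'_apply _ _).symm
      _ = plin x := by rw [Matrix.toLin'_toMatrix' plin]
  have hYpb : ∀ b ∈ S, b * Yp = Yp * b := by
    intro b hb
    have hv1 : ∀ x : K → ℂ, (b * Yp) *ᵥ x = (Yp * b) *ᵥ x := by
      intro x
      rw [← Matrix.mulVec_mulVec, ← Matrix.mulVec_mulVec, hYp_apply, hYp_apply]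
      exact congrArg toV (hcomm b hb (fromV x)).symm
    have : Matrix.toLin' (b * Yp) = Matrix.toLin' (Yp * b) := by
      apply LinearMap.ext
      intro x
      rw [Matrix.toLin'_apply, Matrix.toLin'_apply]
      exact hv1 x
    exact Matrix.toLin'.injective this
  have hXYp : X * Yp = Yp * X := hX Yp hYpb
  have hvW : fromV v ∈ W := ⟨1, h1, by
    show fromV ((1 : Matrix K K ℂ) *ᵥ v) = fromV v
    rw [Matrix.one_mulVec]⟩
  have hYpv : Yp *ᵥ v = v := by
    rw [hYp_apply]
    show toV (pr (fromV v)) = v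
    rw [hpr_of_mem _ hvW]
  have h5 : X *ᵥ v = plin (X *ᵥ v) := by
    calc X *ᵥ v = X *ᵥ (Yp *ᵥ v) := by rw [hYpv]
      _ = (X * Yp) *ᵥ v := Matrix.mulVec_mulVec _ _ _
      _ = (Yp * X) *ᵥ v := by rw [hXYp]
      _ = Yp *ᵥ (X *ᵥ v) := (Matrix.mulVec_mulVec _ _ _).symm
      _ = plin (X *ᵥ v) := hYp_apply _
  have hfinal : fromV (X *ᵥ v) ∈ W := by
    have h6 : fromV (X *ᵥ v) = pr (fromV (X *ᵥ v)) := congrArg fromV h5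
    rw [h6]
    exact hpr_mem _
  obtain ⟨b, hb, hbv⟩ := hfinal
  refine ⟨b, hb, ?_⟩
  have : toV (L b) = toV (fromV (X *ᵥ v)) := congrArg toV hbv
  exact this.symm


/-- Finite-dimensional double commutant theorem for a unital star-closed subalgebra. -/
lemma dct (S : Submodule ℂ (Matrix K K ℂ)) (h1 : (1 : Matrix K K ℂ) ∈ S)
    (hmul : ∀ a ∈ S, ∀ b ∈ S, a * b ∈ S) (hstar : ∀ a ∈ S, aᴴ ∈ S)
    (X : Matrix K K ℂ) (hX : ∀ Y : Matrix K K ℂ, (∀ b ∈ S, b * Y = Y * b) → X * Y = Y * X) :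
    X ∈ S := by
  classical
  -- amplification to K × K
  let amp : Matrix K K ℂ →ₗ[ℂ] Matrix (K × K) (K × K) ℂ :=
    { toFun := fun b => fun p q => b p.1 q.1 * (if p.2 = q.2 then 1 else 0)
      map_add' := fun a b => by
        ext p q
        show ((a + b) p.1 q.1) * (if p.2 = q.2 then 1 else 0) = _
        rw [Matrix.add_apply]
        show _ = a p.1 q.1 * (if p.2 = q.2 then 1 else 0) + b p.1 q.1 * (if p.2 = q.2 then 1 else 0)
        ring
      map_smul' := fun c a => by
        ext p q
        show ((c • a) p.1 q.1) * (if p.2 = q.2 then 1 else 0) = _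
        rw [Matrix.smul_apply]
        show _ = c • (a p.1 q.1 * (if p.2 = q.2 then 1 else 0))
        simp only [smul_eq_mul]
        ring }
  have amp_mul : ∀ a b : Matrix K K ℂ, amp a * amp b = amp (a * b) := by
    intro a b
    ext p q
    rw [Matrix.mul_apply]
    rw [Fintype.sum_prod_type]
    show (∑ m : K, ∑ r : K, (a p.1 m * (if p.2 = r then 1 else 0))
      * (b m q.1 * (if r = q.2 then 1 else 0)))
      = (a * b) p.1 q.1 * (if p.2 = q.2 then 1 else 0)
    rw [Matrix.mul_apply, Finset.sum_mul]
    refine Finset.sum_congr rfl fun m _ => ?_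
    rw [Finset.sum_eq_single p.2]
    · simp
    · intro r _ hr
      simp [Ne.symm hr]
    · intro h; exact absurd (Finset.mem_univ _) h
  have amp_one : amp (1 : Matrix K K ℂ) = 1 := by
    ext p q
    show (1 : Matrix K K ℂ) p.1 q.1 * (if p.2 = q.2 then 1 else 0) = (1 : Matrix (K × K) (K × K) ℂ) p q
    rw [Matrix.one_apply, Matrix.one_apply]
    by_cases h1' : p.1 = q.1 <;> by_cases h2 : p.2 = q.2 <;>
      simp [h1', h2, Prod.ext_iff]
  have amp_star : ∀ a : Matrix K K ℂ, (amp a)ᴴ = amp aᴴ := by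
    intro a
    ext p q
    show star (a q.1 p.1 * (if q.2 = p.2 then 1 else 0)) = star (a q.1 p.1) * (if p.2 = q.2 then 1 else 0)
    rw [star_mul']
    congr 1
    by_cases h : p.2 = q.2 <;> simp [h, eq_comm]
  let T : Submodule ℂ (Matrix (K × K) (K × K) ℂ) := S.map amp
  have hT1 : (1 : Matrix (K × K) (K × K) ℂ) ∈ T := ⟨1, h1, amp_one⟩
  have hTmul : ∀ a ∈ T, ∀ b ∈ T, a * b ∈ T := by
    rintro _ ⟨a, ha, rfl⟩ _ ⟨b, hb, rfl⟩
    exact ⟨a * b, hmul a ha b hb, (amp_mul a b).symm⟩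
  have hTstar : ∀ a ∈ T, aᴴ ∈ T := by
    rintro _ ⟨a, ha, rfl⟩
    exact ⟨aᴴ, hstar a ha, (amp_star a).symm⟩
  -- the amplified X satisfies the commutation hypothesis
  have hXT : ∀ Y : Matrix (K × K) (K × K) ℂ,
      (∀ b ∈ T, b * Y = Y * b) → amp X * Y = Y * amp X := by
    intro Y hY
    -- blocks of Y
    have hblock : ∀ j l : K, ∀ b ∈ S,
        b * Matrix.of (fun i k => Y (i, j) (k, l))
          = Matrix.of (fun i k => Y (i, j) (k, l)) * b := by
      intro j l b hb
      have h7 := hY (amp b) ⟨b, hb, rfl⟩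
      ext i k
      have h8 := congrFun (congrFun h7 (i, j)) (k, l)
      rw [Matrix.mul_apply, Matrix.mul_apply] at h8
      rw [Fintype.sum_prod_type, Fintype.sum_prod_type] at h8
      rw [Matrix.mul_apply, Matrix.mul_apply]
      calc (∑ m : K, b i m * Y (m, j) (k, l))
          = ∑ m : K, ∑ r : K, amp b (i, j) (m, r) * Y (m, r) (k, l) := by
            refine Finset.sum_congr rfl fun m _ => ?_
            rw [Finset.sum_eq_single j]
            · show b i m * Y (m, j) (k, l) = b i m * (if j = j then 1 else 0) * Y (m, j) (k, l)
              simp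
            · intro r _ hr
              show amp b (i, j) (m, r) * Y (m, r) (k, l) = 0
              show b i m * (if j = r then 1 else 0) * Y (m, r) (k, l) = 0
              simp [Ne.symm hr]
            · intro h; exact absurd (Finset.mem_univ _) h
        _ = ∑ m : K, ∑ r : K, Y (i, j) (m, r) * amp b (m, r) (k, l) := h8
        _ = ∑ m : K, Y (i, j) (m, l) * b m k := by
            refine Finset.sum_congr rfl fun m _ => ?_
            rw [Finset.sum_eq_single l]
            · show Y (i, j) (m, l) * (b m k * (if l = l then 1 else 0)) = Y (i, j) (m, l) * b m k
              simp
            · intro r _ hr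
              show Y (i, j) (m, r) * (b m k * (if r = l then 1 else 0)) = 0
              simp [hr]
            · intro h; exact absurd (Finset.mem_univ _) h
    ext p q
    rw [Matrix.mul_apply, Matrix.mul_apply, Fintype.sum_prod_type, Fintype.sum_prod_type]
    have hX9 := hX _ (hblock p.2 q.2)
    have h10 := congrFun (congrFun hX9 p.1) q.1
    rw [Matrix.mul_apply, Matrix.mul_apply] at h10
    calc (∑ m : K, ∑ r : K, amp X p (m, r) * Y (m, r) q)
        = ∑ m : K, X p.1 m * Y (m, p.2) q := by
          refine Finset.sum_congr rfl fun m _ => ?_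
          rw [Finset.sum_eq_single p.2]
          · show X p.1 m * (if p.2 = p.2 then 1 else 0) * Y (m, p.2) q = X p.1 m * Y (m, p.2) q
            simp
          · intro r _ hr
            show X p.1 m * (if p.2 = r then 1 else 0) * Y (m, r) q = 0
            simp [Ne.symm hr]
          · intro h; exact absurd (Finset.mem_univ _) h
      _ = ∑ m : K, Y p (m, q.2) * X m q.1 := h10
      _ = ∑ m : K, ∑ r : K, Y p (m, r) * amp X (m, r) q := by
          refine Finset.sum_congr rfl fun m _ => ?_
          rw [Finset.sum_eq_single q.2]
          · show Y p (m, q.2) * X m q.1 = Y p (m, q.2) * (X m q.1 * (if q.2 = q.2 then 1 else 0))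
            simp
          · intro r _ hr
            show Y p (m, r) * (X m q.1 * (if r = q.2 then 1 else 0)) = 0
            simp [hr]
          · intro h; exact absurd (Finset.mem_univ _) h
  -- apply the cyclic-vector lemma with the "maximally entangled" vector
  obtain ⟨b', hb'T, heq⟩ := cyclic T hT1 hTmul hTstar (amp X) hXT
    (fun p => if p.1 = p.2 then 1 else 0)
  obtain ⟨b, hb, rfl⟩ := hb'T
  have hshape : ∀ M : Matrix K K ℂ,
      (amp M *ᵥ (fun p : K × K => if p.1 = p.2 then 1 else 0)) = fun p => M p.1 p.2 := by
    intro M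
    funext p
    show (∑ q : K × K, amp M p q * (if q.1 = q.2 then 1 else 0)) = M p.1 p.2
    rw [Fintype.sum_prod_type]
    calc (∑ m : K, ∑ r : K, M p.1 m * (if p.2 = r then 1 else 0) * (if m = r then 1 else 0))
        = ∑ m : K, M p.1 m * (if m = p.2 then 1 else 0) := by
          refine Finset.sum_congr rfl fun m _ => ?_
          rw [Finset.sum_eq_single p.2]
          · simp
          · intro r _ hr
            simp [Ne.symm hr]
          · intro h; exact absurd (Finset.mem_univ _) h
      _ = M p.1 p.2 := by
          rw [Finset.sum_eq_single p.2] <;> simp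
          intro r hr
          simp [hr]
  have : X = b := by
    ext i j
    have h11 := congrFun heq (i, j)
    rw [hshape X, hshape b] at heq
    exact congrFun heq (i, j)
  rw [this]
  exact hb

end DCT



lemma vanish_of_imaginary {f : ℂ → ℂ} (hf : Differentiable ℂ f)
    (h0 : ∀ t : ℝ, f (Complex.I * (t : ℂ)) = 0) (z : ℂ) : f z = 0 := by
  have hA : AnalyticOnNhd ℂ f Set.univ := fun x _ => hf.analyticAt x
  have hfreq : ∃ᶠ w in nhdsWithin 0 {(0 : ℂ)}ᶜ, f w = 0 := by
    have htend : Filter.Tendsto (fun m : ℕ => (Complex.I * ((1 / (m + 1) : ℝ) : ℂ)))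
        Filter.atTop (nhdsWithin 0 {(0 : ℂ)}ᶜ) := by
      rw [tendsto_nhdsWithin_iff]
      constructor
      · have h1 : Filter.Tendsto (fun m : ℕ => ((1 / (m + 1) : ℝ) : ℂ))
            Filter.atTop (nhds 0) := by
          have h2 := (Complex.continuous_ofReal.tendsto 0).comp
            tendsto_one_div_add_atTop_nhds_zero_nat
          rw [Complex.ofReal_zero] at h2
          refine h2.congr fun m => ?_
          simp
        have h3 := h1.const_mul Complex.I
        simpa using h3
      · refine Filter.Eventually.of_forall fun m => ?_
        simp only [Set.mem_compl_iff, Set.mem_singleton_iff]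
        intro hcon
        rw [mul_eq_zero] at hcon
        rcases hcon with h | h
        · exact Complex.I_ne_zero h
        · rw [Complex.ofReal_eq_zero] at h
          have : (0 : ℝ) < 1 / (m + 1) := by positivity
          linarith [h ▸ this]
    exact htend.frequently (Filter.Frequently.of_forall fun m => h0 _)
  exact hA.eqOn_zero_of_preconnected_of_frequently_eq_zero isPreconnected_univ
    (Set.mem_univ (0 : ℂ)) hfreq (Set.mem_univ z)

lemma vanish_of_cofinite {f : ℂ → ℂ} (hf : Differentiable ℂ f) {s : Set ℂ}
    (hs : s.Finite) (h0 : ∀ z ∉ s, f z = 0) (z : ℂ) : f z = 0 := by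
  have hA : AnalyticOnNhd ℂ f Set.univ := fun x _ => hf.analyticAt x
  obtain ⟨z₀, hz₀⟩ := hs.infinite_compl.nonempty
  have hopen : IsOpen sᶜ := hs.isClosed.isOpen_compl
  have hev : f =ᶠ[nhds z₀] 0 := by
    filter_upwards [hopen.mem_nhds hz₀] with w hw
    exact h0 w hw
  exact hA.eqOn_zero_of_preconnected_of_eventuallyEq_zero isPreconnected_univ
    (Set.mem_univ z₀) hev (Set.mem_univ z)


open scoped ComplexOrder

variable {n d : ℕ}

lemma comm_of_invertible
    (X : Matrix (Fin n → Fin d) (Fin n → Fin d) ℂ)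
    (hcomm : ∀ U ∈ Matrix.unitaryGroup (Fin d) ℂ,
      X * kroneckerPower n U = kroneckerPower n U * X)
    (A : Matrix (Fin d) (Fin d) ℂ) (hA : IsUnit A) :
    X * kroneckerPower n A = kroneckerPower n A * X := by
  classical
  have hH : (Aᴴ * A).IsHermitian := (Matrix.posSemidef_conjTranspose_mul_self A).1
  set V : Matrix (Fin d) (Fin d) ℂ := (hH.eigenvectorUnitary : Matrix (Fin d) (Fin d) ℂ) with hVdef
  set eig : Fin d → ℝ := hH.eigenvalues with heigdef
  have hVmem : V ∈ Matrix.unitaryGroup (Fin d) ℂ := hH.eigenvectorUnitary.2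
  have hV1 : star V * V = 1 := (Matrix.mem_unitaryGroup_iff'.mp hVmem)
  have hV2 : V * star V = 1 := (Matrix.mem_unitaryGroup_iff.mp hVmem)
  -- positivity of the eigenvalues
  have hdetA : A.det ≠ 0 := by
    intro h
    have := (Matrix.isUnit_iff_isUnit_det A).mp hA
    rw [h] at this
    exact (by simpa using this : IsUnit (0 : ℂ)).ne_zero rfl
  have hdet2 : (Aᴴ * A).det ≠ 0 := by
    rw [Matrix.det_mul, Matrix.det_conjTranspose]
    exact mul_ne_zero (star_ne_zero.mpr hdetA) hdetA
  have hpos : ∀ i, 0 < eig i := by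
    intro i
    have hne : eig i ≠ 0 := by
      intro h
      apply hdet2
      rw [hH.det_eq_prod_eigenvalues]
      refine Finset.prod_eq_zero (Finset.mem_univ i) ?_
      have h2 : hH.eigenvalues i = 0 := h
      rw [h2]
      simp
    have hnonneg : 0 ≤ eig i := Matrix.eigenvalues_conjTranspose_mul_self_nonneg A i
    exact lt_of_le_of_ne hnonneg (Ne.symm hne)
  -- the analytic one-parameter family
  set μ : Fin d → ℝ := fun i => Real.log (eig i) / 2 with hμdef
  set E : ℂ → Matrix (Fin d) (Fin d) ℂ :=
    fun z => V * Matrix.diagonal (fun i => Complex.exp (z * (μ i : ℂ))) * Vᴴ with hEdef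
  have hsand : ∀ v w : Fin d → ℂ,
      (V * Matrix.diagonal v * Vᴴ) * (V * Matrix.diagonal w * Vᴴ)
        = V * Matrix.diagonal (fun i => v i * w i) * Vᴴ := by
    intro v w
    have h1 : Vᴴ * (V * Matrix.diagonal w * Vᴴ)
        = Matrix.diagonal w * Vᴴ := by
      rw [← Matrix.star_eq_conjTranspose V, ← mul_assoc, ← mul_assoc, hV1, one_mul]
    calc (V * Matrix.diagonal v * Vᴴ) * (V * Matrix.diagonal w * Vᴴ)
        = V * Matrix.diagonal v * (Vᴴ * (V * Matrix.diagonal w * Vᴴ)) := by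
          rw [mul_assoc]
      _ = V * Matrix.diagonal v * (Matrix.diagonal w * Vᴴ) := by rw [h1]
      _ = V * (Matrix.diagonal v * Matrix.diagonal w) * Vᴴ := by
          rw [mul_assoc, mul_assoc, mul_assoc]
      _ = V * Matrix.diagonal (fun i => v i * w i) * Vᴴ := by
          rw [Matrix.diagonal_mul_diagonal]
  have hEmul : ∀ z w : ℂ, E z * E w = E (z + w) := by
    intro z w
    rw [hEdef]
    dsimp only
    rw [hsand]
    have : (fun i => Complex.exp (z * (μ i : ℂ)) * Complex.exp (w * (μ i : ℂ)))
        = fun i => Complex.exp ((z + w) * (μ i : ℂ)) := by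
      funext i
      rw [← Complex.exp_add, ← add_mul]
    rw [this]
  have hE0 : E 0 = 1 := by
    rw [hEdef]
    dsimp only
    have : (fun i : Fin d => Complex.exp ((0 : ℂ) * (μ i : ℂ))) = fun _ => 1 := by
      funext i; rw [zero_mul, Complex.exp_zero]
    rw [this, Matrix.diagonal_one, mul_one, ← Matrix.star_eq_conjTranspose, hV2]
  have hEstar : ∀ z : ℂ, (E z)ᴴ = E (starRingEnd ℂ z) := by
    intro z
    rw [hEdef]
    dsimp only
    rw [Matrix.conjTranspose_mul, Matrix.conjTranspose_mul,
      Matrix.conjTranspose_conjTranspose, Matrix.diagonal_conjTranspose]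
    have : (star fun i => Complex.exp (z * (μ i : ℂ)))
        = fun i => Complex.exp (starRingEnd ℂ z * (μ i : ℂ)) := by
      funext i
      show starRingEnd ℂ (Complex.exp (z * (μ i : ℂ))) = _
      rw [← Complex.exp_conj, _root_.map_mul, Complex.conj_ofReal]
    rw [this, mul_assoc]
  have hE1sq : E 1 * E 1 = Aᴴ * A := by
    rw [hEmul]
    have h2 : (fun i : Fin d => Complex.exp (((1 : ℂ) + 1) * (μ i : ℂ)))
        = fun i => (eig i : ℂ) := by
      funext i
      have : ((1 : ℂ) + 1) * (μ i : ℂ) = ((Real.log (eig i) : ℝ) : ℂ) := by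
        rw [hμdef]
        push_cast
        ring
      rw [this, ← Complex.ofReal_exp, Real.exp_log (hpos i)]
    rw [hEdef]
    dsimp only
    rw [h2]
    have h3 := hH.spectral_theorem
    rw [Unitary.conjStarAlgAut_apply] at h3
    rw [← Matrix.star_eq_conjTranspose]
    exact h3.symm
  have hEneg1 : E (-1) * E 1 = 1 := by rw [hEmul]; norm_num; exact hE0
  have hE1neg : E 1 * E (-1) = 1 := by rw [hEmul]; norm_num; exact hE0
  set U : Matrix (Fin d) (Fin d) ℂ := A * E (-1) with hUdef
  have hEstarneg : star (E (-1)) = E (-1) := by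
    rw [Matrix.star_eq_conjTranspose, hEstar]
    norm_num
  have hUA : U * E 1 = A := by
    rw [hUdef, mul_assoc, hEneg1, mul_one]
  have hUunit : U ∈ Matrix.unitaryGroup (Fin d) ℂ := by
    rw [Matrix.mem_unitaryGroup_iff']
    rw [hUdef, Matrix.star_mul, hEstarneg]
    calc E (-1) * star A * (A * E (-1))
        = E (-1) * (Aᴴ * A) * E (-1) := by
          rw [Matrix.star_eq_conjTranspose]
          noncomm_ring
      _ = E (-1) * (E 1 * E 1) * E (-1) := by rw [hE1sq]
      _ = (E (-1) * E 1) * (E 1 * E (-1)) := by noncomm_ring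
      _ = 1 := by rw [hEneg1, hE1neg, one_mul]
  have hEt : ∀ t : ℝ, E (Complex.I * (t : ℂ)) ∈ Matrix.unitaryGroup (Fin d) ℂ := by
    intro t
    rw [Matrix.mem_unitaryGroup_iff']
    rw [Matrix.star_eq_conjTranspose, hEstar]
    have : starRingEnd ℂ (Complex.I * (t : ℂ)) = -(Complex.I * (t : ℂ)) := by
      rw [_root_.map_mul, Complex.conj_I, Complex.conj_ofReal]
      ring
    rw [this, hEmul, neg_add_cancel, hE0]
  have hUEt : ∀ t : ℝ, U * E (Complex.I * (t : ℂ)) ∈ Matrix.unitaryGroup (Fin d) ℂ :=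
    fun t => mul_mem hUunit (hEt t)
  -- differentiability of the entries
  have hEapply : ∀ (z : ℂ) (a b : Fin d),
      E z a b = ∑ i, V a i * Complex.exp (z * (μ i : ℂ)) * star (V b i) := by
    intro z a b
    rw [hEdef]
    dsimp only
    rw [Matrix.mul_apply]
    refine Finset.sum_congr rfl fun j _ => ?_
    rw [Matrix.mul_diagonal, Matrix.conjTranspose_apply]
  have hdiffE : ∀ a b : Fin d, Differentiable ℂ fun z => E z a b := by
    intro a b
    have heq : (fun z => E z a b)
        = fun z => ∑ i, V a i * Complex.exp (z * (μ i : ℂ)) * star (V b i) :=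
      funext fun z => hEapply z a b
    rw [heq]
    apply Differentiable.fun_sum
    intro i _
    exact ((Complex.differentiable_exp.comp
      (differentiable_id.mul_const _)).const_mul _).mul_const _
  have hdiffM : ∀ a b : Fin d, Differentiable ℂ fun z => (U * E z) a b := by
    intro a b
    have heq : (fun z => (U * E z) a b) = fun z => ∑ c, U a c * E z c b :=
      funext fun z => Matrix.mul_apply
    rw [heq]
    apply Differentiable.fun_sum
    intro c _
    exact (hdiffE c b).const_mul _
  have hdiffKP : ∀ f g : Fin n → Fin d,
      Differentiable ℂ fun z => kroneckerPower n (U * E z) f g := by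
    intro f g
    have h := Differentiable.fun_finsetProd (u := Finset.univ)
      (f := fun (k : Fin n) (z : ℂ) => (U * E z) (f k) (g k))
      (fun k _ => hdiffM (f k) (g k))
    show Differentiable ℂ fun z : ℂ => ∏ k : Fin n, (U * E z) (f k) (g k)
    exact h
  -- conclude by the identity theorem, entry by entry
  have hmain : ∀ f g : Fin n → Fin d,
      (X * kroneckerPower n (U * E 1)) f g = (kroneckerPower n (U * E 1) * X) f g := by
    intro f g
    have hdiffF : Differentiable ℂ fun z =>
        (X * kroneckerPower n (U * E z)) f g - (kroneckerPower n (U * E z) * X) f g := by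
      apply Differentiable.sub
      · have heq : (fun z => (X * kroneckerPower n (U * E z)) f g)
            = fun z => ∑ h, X f h * kroneckerPower n (U * E z) h g :=
          funext fun z => Matrix.mul_apply
        rw [heq]
        exact Differentiable.fun_sum fun h _ => (hdiffKP h g).const_mul _
      · have heq : (fun z => (kroneckerPower n (U * E z) * X) f g)
            = fun z => ∑ h, kroneckerPower n (U * E z) f h * X h g :=
          funext fun z => Matrix.mul_apply
        rw [heq]
        exact Differentiable.fun_sum fun h _ => (hdiffKP f h).mul_const _
    have hvan : ∀ t : ℝ,
        (X * kroneckerPower n (U * E (Complex.I * (t : ℂ)))) f g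
          - (kroneckerPower n (U * E (Complex.I * (t : ℂ))) * X) f g = 0 := by
      intro t
      have := hcomm _ (hUEt t)
      rw [sub_eq_zero]
      rw [this]
    have := vanish_of_imaginary hdiffF hvan 1
    rwa [sub_eq_zero] at this
  ext f g
  rw [← hUA]
  exact hmain f g

lemma comm_all
    (X : Matrix (Fin n → Fin d) (Fin n → Fin d) ℂ)
    (hcomm : ∀ U ∈ Matrix.unitaryGroup (Fin d) ℂ,
      X * kroneckerPower n U = kroneckerPower n U * X)
    (A : Matrix (Fin d) (Fin d) ℂ) :
    X * kroneckerPower n A = kroneckerPower n A * X := by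
  classical
  have hpoly : ∀ z : ℂ, Polynomial.eval z (Matrix.charpoly (-A)) = Matrix.det (A + z • (1 : Matrix (Fin d) (Fin d) ℂ)) := by
    intro z
    rw [Matrix.charpoly]
    rw [show Polynomial.eval z (Matrix.det (Matrix.charmatrix (-A)))
        = (Polynomial.evalRingHom z) (Matrix.det (Matrix.charmatrix (-A))) from rfl]
    rw [RingHom.map_det]
    congr 1
    rw [RingHom.mapMatrix_apply]
    ext i j
    rw [Matrix.map_apply]
    by_cases h : i = j
    · subst h
      rw [Matrix.charmatrix_apply_eq]
      simp [Matrix.add_apply, Matrix.smul_apply, Matrix.one_apply]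
      ring
    · rw [Matrix.charmatrix_apply_ne _ _ _ h]
      simp [Matrix.add_apply, Matrix.smul_apply, Matrix.one_apply, h]
  have hroots : {z : ℂ | (Matrix.charpoly (-A)).IsRoot z}.Finite :=
    Polynomial.finite_setOf_isRoot (Matrix.charpoly_monic (-A)).ne_zero
  have hentry : ∀ f g : Fin n → Fin d,
      (X * kroneckerPower n A) f g = (kroneckerPower n A * X) f g := by
    intro f g
    have hdiffAz : ∀ a b : Fin d, Differentiable ℂ fun z : ℂ => (A + z • (1 : Matrix (Fin d) (Fin d) ℂ)) a b := by
      intro a b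
      have heq : (fun z : ℂ => (A + z • (1 : Matrix (Fin d) (Fin d) ℂ)) a b)
          = fun z : ℂ => A a b + z * (1 : Matrix (Fin d) (Fin d) ℂ) a b := by
        funext z
        rw [Matrix.add_apply, Matrix.smul_apply, smul_eq_mul]
      rw [heq]
      exact (differentiable_id.mul_const _).const_add _
    have hdiffKPz : ∀ f' g' : Fin n → Fin d,
        Differentiable ℂ fun z : ℂ => kroneckerPower n (A + z • (1 : Matrix (Fin d) (Fin d) ℂ)) f' g' := by
      intro f' g'
      have h := Differentiable.fun_finsetProd (u := Finset.univ)
        (f := fun (k : Fin n) (z : ℂ) => (A + z • (1 : Matrix (Fin d) (Fin d) ℂ)) (f' k) (g' k))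
        (fun k _ => hdiffAz (f' k) (g' k))
      show Differentiable ℂ fun z : ℂ => ∏ k : Fin n, (A + z • (1 : Matrix (Fin d) (Fin d) ℂ)) (f' k) (g' k)
      exact h
    have hdiffG : Differentiable ℂ fun z : ℂ =>
        (X * kroneckerPower n (A + z • (1 : Matrix (Fin d) (Fin d) ℂ))) f g - (kroneckerPower n (A + z • (1 : Matrix (Fin d) (Fin d) ℂ)) * X) f g := by
      apply Differentiable.sub
      · have heq : (fun z : ℂ => (X * kroneckerPower n (A + z • (1 : Matrix (Fin d) (Fin d) ℂ))) f g)
            = fun z => ∑ h, X f h * kroneckerPower n (A + z • (1 : Matrix (Fin d) (Fin d) ℂ)) h g :=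
          funext fun z => Matrix.mul_apply
        rw [heq]
        exact Differentiable.fun_sum fun h _ => (hdiffKPz h g).const_mul _
      · have heq : (fun z : ℂ => (kroneckerPower n (A + z • (1 : Matrix (Fin d) (Fin d) ℂ)) * X) f g)
            = fun z => ∑ h, kroneckerPower n (A + z • (1 : Matrix (Fin d) (Fin d) ℂ)) f h * X h g :=
          funext fun z => Matrix.mul_apply
        rw [heq]
        exact Differentiable.fun_sum fun h _ => (hdiffKPz f h).mul_const _
    have hvan : ∀ z : ℂ, z ∉ {z : ℂ | (Matrix.charpoly (-A)).IsRoot z} →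
        ((X * kroneckerPower n (A + z • (1 : Matrix (Fin d) (Fin d) ℂ))) f g
          - (kroneckerPower n (A + z • (1 : Matrix (Fin d) (Fin d) ℂ)) * X) f g = 0) := by
      intro z hz
      have hdet : Matrix.det (A + z • (1 : Matrix (Fin d) (Fin d) ℂ)) ≠ 0 := by
        rw [← hpoly z]
        exact hz
      have hunit : IsUnit (A + z • (1 : Matrix (Fin d) (Fin d) ℂ)) :=
        (Matrix.isUnit_iff_isUnit_det _).mpr (isUnit_iff_ne_zero.mpr hdet)
      have := comm_of_invertible X hcomm (A + z • (1 : Matrix (Fin d) (Fin d) ℂ)) hunit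
      rw [sub_eq_zero, this]
    have h0 := vanish_of_cofinite hdiffG hroots hvan 0
    rw [show A + (0 : ℂ) • (1 : Matrix (Fin d) (Fin d) ℂ) = A by rw [zero_smul, add_zero]] at h0
    rwa [sub_eq_zero] at h0
  ext f g
  exact hentry f g

end SW

/-- Dual direction of Schur–Weyl duality: the span of the permutation matrices equals the
commutant of the `n`-th Kronecker powers of unitary matrices. -/
theorem stmt1 (n d : ℕ) (hn : 0 < n) (hd : 0 < d) :
    (Submodule.span ℂ {M : Matrix (Fin n → Fin d) (Fin n → Fin d) ℂ |
        ∃ σ : Equiv.Perm (Fin n), M = permMatrix n d σ} : Set _) =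
      {X : Matrix (Fin n → Fin d) (Fin n → Fin d) ℂ |
        ∀ U ∈ Matrix.unitaryGroup (Fin d) ℂ,
          X * kroneckerPower n U = kroneckerPower n U * X} := by
  classical
  ext X
  simp only [SetLike.mem_coe, Set.mem_setOf_eq]
  constructor
  · intro hX U hU
    induction hX using Submodule.span_induction with
    | mem M hM =>
      obtain ⟨σ, rfl⟩ := hM
      exact SW.permMatrix_commute_kroneckerPower σ U
    | zero => simp
    | add a b ha hb ha' hb' => rw [add_mul, mul_add, ha', hb']
    | smul c a ha ha' => rw [smul_mul_assoc, mul_smul_comm, ha']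
  · intro hX
    set B := Submodule.span ℂ {M : Matrix (Fin n → Fin d) (Fin n → Fin d) ℂ |
        ∃ σ : Equiv.Perm (Fin n), M = permMatrix n d σ} with hBdef
    have hB1 : (1 : Matrix (Fin n → Fin d) (Fin n → Fin d) ℂ) ∈ B :=
      Submodule.subset_span ⟨1, SW.permMatrix_one.symm⟩
    have hBmulle : B * B ≤ B := by
      rw [hBdef, Submodule.span_mul_span]
      refine Submodule.span_le.mpr ?_
      rintro x hx
      rw [Set.mem_mul] at hx
      obtain ⟨y, hy, z, hz, rfl⟩ := hx
      obtain ⟨σ, rfl⟩ := hy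
      obtain ⟨τ, rfl⟩ := hz
      exact Submodule.subset_span ⟨σ * τ, (SW.permMatrix_mul σ τ : _)⟩
    have hBmul : ∀ a ∈ B, ∀ b ∈ B, a * b ∈ B :=
      fun a ha b hb => hBmulle (Submodule.mul_mem_mul ha hb)
    have hBstar : ∀ a ∈ B, aᴴ ∈ B := by
      intro a ha
      induction ha using Submodule.span_induction with
      | mem M hM =>
        obtain ⟨σ, rfl⟩ := hM
        exact Submodule.subset_span ⟨σ⁻¹, (SW.permMatrix_conjTranspose σ : _)⟩
      | zero => rw [Matrix.conjTranspose_zero]; exact Submodule.zero_mem _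
      | add a b ha hb ha' hb' => rw [Matrix.conjTranspose_add]; exact Submodule.add_mem _ ha' hb'
      | smul c a ha ha' => rw [Matrix.conjTranspose_smul]; exact Submodule.smul_mem _ _ ha'
    have hXhyp : ∀ Y : Matrix (Fin n → Fin d) (Fin n → Fin d) ℂ,
        (∀ b ∈ B, b * Y = Y * b) → X * Y = Y * X := by
      intro Y hY
      have hYperm : ∀ σ : Equiv.Perm (Fin n),
          permMatrix n d σ * Y = Y * permMatrix n d σ :=
        fun σ => hY _ (Submodule.subset_span ⟨σ, rfl⟩)
      have hYspan := SW.mem_kpSpan_of_perm_comm hn Y hYperm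
      have hcommA : ∀ A : Matrix (Fin d) (Fin d) ℂ,
          X * kroneckerPower n A = kroneckerPower n A * X := SW.comm_all X hX
      exact Submodule.span_induction
        (fun M hM => by obtain ⟨A, rfl⟩ := hM; exact hcommA A)
        (by simp)
        (fun a b _ _ ha' hb' => by rw [mul_add, add_mul, ha', hb'])
        (fun c a _ ha' => by rw [mul_smul_comm, smul_mul_assoc, ha'])
        hYspan
    exact SW.dct B hB1 hBmul hBstar X hXhyp
end

section
/- Let G be a finite group, m₁, m₂ positive integers, and ρ₁ : G →* unitaryGroup (Fin m₁) ℂ, ρ₂ : G →* unitaryGroup (Fin m₂) ℂ unitary representations that are inequivalent, i.e., the only matrix T ∈ Matrix (Fin m₁) (Fin m₂) ℂ with T · ρ₂(g) = ρ₁(g) · T for all g ∈ G is T = 0. Then for all indices i, j ∈ Fin m₁ and i', j' ∈ Fin m₂, Σ_{g ∈ G} (ρ₁(g))_{j i} · conj((ρ₂(g))_{j' i'}) = 0. (Orthogonality of matrix coefficients of inequivalent irreps, used to diagonalize the quantum Fourier transform over the symmetric group.) -/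
open Matrix

lemma stmt4_aux {m₁ m₂ : ℕ} (A : Matrix (Fin m₁) (Fin m₁) ℂ) (B : Matrix (Fin m₂) (Fin m₂) ℂ)
    (i j : Fin m₁) (i' j' : Fin m₂) :
    (A * Matrix.single i i' (1 : ℂ) * B) j j' = A j i * B i' j' := by
  simp [Matrix.mul_apply, Matrix.single, ite_and, Finset.sum_ite_eq,
    Finset.mul_sum, mul_ite, ite_mul]

/-- Orthogonality of matrix coefficients of inequivalent unitary representations of a
finite group. -/
theorem stmt4 (G : Type*) [Group G] [Fintype G] (m₁ m₂ : ℕ) (hm₁ : 0 < m₁) (hm₂ : 0 < m₂)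
    (ρ₁ : G →* Matrix.unitaryGroup (Fin m₁) ℂ)
    (ρ₂ : G →* Matrix.unitaryGroup (Fin m₂) ℂ)
    (hineq : ∀ T : Matrix (Fin m₁) (Fin m₂) ℂ,
        (∀ g : G, T * (ρ₂ g : Matrix (Fin m₂) (Fin m₂) ℂ)
            = (ρ₁ g : Matrix (Fin m₁) (Fin m₁) ℂ) * T) → T = 0)
    (i j : Fin m₁) (i' j' : Fin m₂) :
    ∑ g : G, (ρ₁ g : Matrix (Fin m₁) (Fin m₁) ℂ) j i *
        (starRingEnd ℂ) ((ρ₂ g : Matrix (Fin m₂) (Fin m₂) ℂ) j' i') = 0 := by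
  set T : Matrix (Fin m₁) (Fin m₂) ℂ :=
    ∑ g : G, (ρ₁ g : Matrix (Fin m₁) (Fin m₁) ℂ) * Matrix.single i i' (1 : ℂ) *
      (ρ₂ g⁻¹ : Matrix (Fin m₂) (Fin m₂) ℂ) with hT
  have hTzero : T = 0 := by
    apply hineq
    intro h
    have c1 : ∀ a b : G, (ρ₁ (a * b) : Matrix (Fin m₁) (Fin m₁) ℂ)
        = (ρ₁ a : Matrix (Fin m₁) (Fin m₁) ℂ) * (ρ₁ b : Matrix (Fin m₁) (Fin m₁) ℂ) :=
      fun a b => congrArg Subtype.val (map_mul ρ₁ a b)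
    have c2 : ∀ a b : G, (ρ₂ (a * b) : Matrix (Fin m₂) (Fin m₂) ℂ)
        = (ρ₂ a : Matrix (Fin m₂) (Fin m₂) ℂ) * (ρ₂ b : Matrix (Fin m₂) (Fin m₂) ℂ) :=
      fun a b => congrArg Subtype.val (map_mul ρ₂ a b)
    rw [hT, Matrix.sum_mul, Matrix.mul_sum]
    refine Fintype.sum_equiv (Equiv.mulLeft h⁻¹) _ _ fun g => ?_
    simp only [Equiv.coe_mulLeft]
    rw [show (h⁻¹ * g)⁻¹ = g⁻¹ * h by group, c2 g⁻¹ h,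
      ← Matrix.mul_assoc, ← Matrix.mul_assoc, ← Matrix.mul_assoc,
      ← c1 h (h⁻¹ * g), show h * (h⁻¹ * g) = g by group, Matrix.mul_assoc]
  have hentry := congrFun (congrFun hTzero j) j'
  simp only [hT, Matrix.sum_apply, Matrix.zero_apply] at hentry
  rw [← hentry]
  refine Finset.sum_congr rfl fun g _ => ?_
  have hstar : (ρ₂ g⁻¹ : Matrix (Fin m₂) (Fin m₂) ℂ)
      = ((ρ₂ g : Matrix (Fin m₂) (Fin m₂) ℂ))ᴴ := by
    rw [map_inv]; rfl
  rw [stmt4_aux, hstar, Matrix.conjTranspose_apply]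
  rfl
end

section
/- Let G be a finite group, Λ a finite index type, and for each λ ∈ Λ let m_λ be a positive integer and ρ_λ : G →* unitaryGroup (Fin m_λ) ℂ a unitary representation such that: (i) each ρ_λ is irreducible (the only subspaces of ℂ^{m_λ} invariant under all ρ_λ(g) are 0 and ℂ^{m_λ}); (ii) for λ ≠ λ', ρ_λ and ρ_{λ'} are inequivalent (the only matrix T with T ρ_{λ'}(g) = ρ_λ(g) T for all g is T = 0); and (iii) Σ_{λ ∈ Λ} m_λ² = |G|. Then the linear map F from the space of functions x : G → ℂ to the product Π_{λ} Matrix (Fin m_λ) (Fin m_λ) ℂ defined by F(x)(λ)(i, j) = Σ_{σ ∈ G} √(m_λ/|G|) · x(σ) · (ρ_λ(σ))_{j i} is a bijective linear isometry: it preserves inner products, where the domain carries the inner product ⟨x, y⟩ = Σ_{σ} conj(x σ) · y σ and the codomain carries the sum over λ of Frobenius inner products ⟨M, N⟩ = Σ_{i,j} conj(M i j) · N i j. (Well-definedness and unitarity of the quantum Fourier transform over the symmetric group, Eqs. (7)–(8).) -/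
open Matrix

-- auxiliary lemmas
-- scalar Schur lemma
lemma schur_scalar {n : ℕ} (hn : 0 < n) (S : Set (Matrix (Fin n) (Fin n) ℂ))
    (hirr : ∀ W : Submodule ℂ (Fin n → ℂ),
      (∀ A ∈ S, ∀ v ∈ W, A.mulVec v ∈ W) → W = ⊥ ∨ W = ⊤)
    (T : Matrix (Fin n) (Fin n) ℂ) (hT : ∀ A ∈ S, T * A = A * T) :
    ∃ c : ℂ, T = c • (1 : Matrix (Fin n) (Fin n) ℂ) := by
  have : Nontrivial (Fin n → ℂ) := by
    have : Nonempty (Fin n) := ⟨⟨0, hn⟩⟩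
    infer_instance
  obtain ⟨μ, hμ⟩ := Module.End.exists_eigenvalue (Matrix.mulVecLin T)
  refine ⟨μ, ?_⟩
  have hW := hirr (Module.End.eigenspace (Matrix.mulVecLin T) μ) ?_
  · rcases hW with h | h
    · exact (hμ h).elim
    · have hall : ∀ v : Fin n → ℂ, T.mulVec v = μ • v := by
        intro v
        have : v ∈ Module.End.eigenspace (Matrix.mulVecLin T) μ := h ▸ Submodule.mem_top
        simpa [Module.End.mem_eigenspace_iff] using this
      ext i j
      have := congrFun (hall (Pi.single j 1)) i
      simpa [Matrix.mulVec_single, Matrix.one_apply, Pi.single_apply, mul_comm] using this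
  · intro A hA v hv
    rw [Module.End.mem_eigenspace_iff] at hv ⊢
    have h1 : T.mulVec (A.mulVec v) = A.mulVec (T.mulVec v) := by
      rw [Matrix.mulVec_mulVec, Matrix.mulVec_mulVec, hT A hA]
    simp only [Matrix.mulVecLin_apply] at hv ⊢
    rw [h1, hv, Matrix.mulVec_smul]

lemma intertwine {G : Type*} [Group G] [Fintype G] {n p : ℕ}
    (ρ1 : G →* Matrix.unitaryGroup (Fin n) ℂ) (ρ2 : G →* Matrix.unitaryGroup (Fin p) ℂ)
    (E : Matrix (Fin n) (Fin p) ℂ) (g : G) :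
    (∑ σ : G, (ρ1 σ : Matrix (Fin n) (Fin n) ℂ) * E * star (ρ2 σ : Matrix (Fin p) (Fin p) ℂ))
        * (ρ2 g : Matrix (Fin p) (Fin p) ℂ)
      = (ρ1 g : Matrix (Fin n) (Fin n) ℂ) *
        ∑ σ : G, (ρ1 σ : Matrix (Fin n) (Fin n) ℂ) * E * star (ρ2 σ : Matrix (Fin p) (Fin p) ℂ) := by
  rw [Matrix.sum_mul, Matrix.mul_sum]
  refine Fintype.sum_equiv (Equiv.mulLeft g⁻¹) _ _ fun τ => ?_
  have h1 : (ρ1 (g⁻¹ * τ) : Matrix (Fin n) (Fin n) ℂ)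
      = star (ρ1 g : Matrix (Fin n) (Fin n) ℂ) * (ρ1 τ : Matrix (Fin n) (Fin n) ℂ) := by
    rw [_root_.map_mul, map_inv]; rfl
  have h2 : (ρ2 (g⁻¹ * τ) : Matrix (Fin p) (Fin p) ℂ)
      = star (ρ2 g : Matrix (Fin p) (Fin p) ℂ) * (ρ2 τ : Matrix (Fin p) (Fin p) ℂ) := by
    rw [_root_.map_mul, map_inv]; rfl
  have h3 : (ρ1 g : Matrix (Fin n) (Fin n) ℂ) * star (ρ1 g : Matrix (Fin n) (Fin n) ℂ) = 1 :=
    (ρ1 g).prop.2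
  simp only [Equiv.coe_mulLeft, h1, h2, StarMul.star_mul, star_star, ← Matrix.mul_assoc]
  rw [h3, Matrix.one_mul]

lemma entry_lem {n p : ℕ} (A : Matrix (Fin n) (Fin n) ℂ) (C : Matrix (Fin p) (Fin p) ℂ)
    (i j : Fin n) (i' j' : Fin p) :
    (A * Matrix.single i i' (1:ℂ) * C) j j' = A j i * C i' j' := by
  simp [Matrix.mul_apply, Matrix.single, ite_and, mul_ite, ite_mul, mul_one, mul_zero,
    zero_mul, Finset.sum_ite_eq, Finset.sum_ite_eq']

lemma trace_lem {p : ℕ} (i i' : Fin p) :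
    Matrix.trace (Matrix.single i i' (1:ℂ)) = if i = i' then 1 else 0 := by
  by_cases h : i = i'
  · subst h; simp [Matrix.trace, Matrix.diag, Matrix.single, Finset.sum_ite_eq]
  · rw [if_neg h]
    refine Finset.sum_eq_zero fun b _ => ?_
    simp only [Matrix.single, Matrix.diag_apply, Matrix.of_apply]
    rw [if_neg]
    rintro ⟨rfl, rfl⟩; exact h rfl

lemma schur_off {G : Type*} [Group G] [Fintype G] {n p : ℕ}
    (ρ1 : G →* Matrix.unitaryGroup (Fin n) ℂ) (ρ2 : G →* Matrix.unitaryGroup (Fin p) ℂ)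
    (hineq : ∀ T : Matrix (Fin n) (Fin p) ℂ,
      (∀ g : G, T * (ρ2 g : Matrix (Fin p) (Fin p) ℂ) = (ρ1 g : Matrix (Fin n) (Fin n) ℂ) * T)
        → T = 0)
    (i j : Fin n) (i' j' : Fin p) :
    ∑ σ : G, (ρ1 σ : Matrix (Fin n) (Fin n) ℂ) j i *
        (starRingEnd ℂ) ((ρ2 σ : Matrix (Fin p) (Fin p) ℂ) j' i') = 0 := by
  have hT := hineq
    (∑ σ : G, (ρ1 σ : Matrix (Fin n) (Fin n) ℂ) * Matrix.single i i' (1:ℂ)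
      * star (ρ2 σ : Matrix (Fin p) (Fin p) ℂ)) (intertwine ρ1 ρ2 _)
  have h0 := congrFun (congrFun hT j) j'
  rw [Matrix.sum_apply] at h0
  simpa [entry_lem, Matrix.star_apply, Complex.star_def] using h0

lemma schur_diag {G : Type*} [Group G] [Fintype G] {n : ℕ} (hn : 0 < n)
    (ρ1 : G →* Matrix.unitaryGroup (Fin n) ℂ)
    (hirr : ∀ W : Submodule ℂ (Fin n → ℂ),
        (∀ g : G, ∀ v ∈ W, Matrix.mulVec (ρ1 g : Matrix (Fin n) (Fin n) ℂ) v ∈ W) →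
        W = ⊥ ∨ W = ⊤)
    (i j i' j' : Fin n) :
    ∑ σ : G, (ρ1 σ : Matrix (Fin n) (Fin n) ℂ) j i *
        (starRingEnd ℂ) ((ρ1 σ : Matrix (Fin n) (Fin n) ℂ) j' i')
      = (if i = i' then 1 else 0) * (if j = j' then 1 else 0)
          * ((Fintype.card G : ℂ) / (n : ℂ)) := by
  have hnC : (n : ℂ) ≠ 0 := Nat.cast_ne_zero.mpr hn.ne'
  set T : Matrix (Fin n) (Fin n) ℂ :=
    ∑ σ : G, (ρ1 σ : Matrix (Fin n) (Fin n) ℂ) * Matrix.single i i' (1:ℂ)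
      * star (ρ1 σ : Matrix (Fin n) (Fin n) ℂ) with hTdef
  obtain ⟨μ, hμ⟩ := schur_scalar hn (Set.range fun g => (ρ1 g : Matrix (Fin n) (Fin n) ℂ))
    (fun W hW => hirr W fun g v hv => hW _ ⟨g, rfl⟩ v hv) T
    (by rintro A ⟨g, rfl⟩; exact intertwine ρ1 ρ1 _ g)
  have htr : Matrix.trace T = (Fintype.card G : ℂ) * (if i = i' then 1 else 0) := by
    rw [hTdef, Matrix.trace_sum]
    have : ∀ σ : G, Matrix.trace ((ρ1 σ : Matrix (Fin n) (Fin n) ℂ)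
        * Matrix.single i i' (1:ℂ) * star (ρ1 σ : Matrix (Fin n) (Fin n) ℂ))
        = if i = i' then 1 else 0 := by
      intro σ
      rw [Matrix.trace_mul_cycle, (ρ1 σ).prop.1, Matrix.one_mul, trace_lem]
    simp [this, Finset.sum_const, Finset.card_univ, mul_comm]
  have htr2 : Matrix.trace T = μ * n := by
    rw [hμ]; simp [Matrix.trace_smul, Matrix.trace_one, smul_eq_mul]
  have hμval : μ = (Fintype.card G : ℂ) * (if i = i' then 1 else 0) / n := by
    rw [htr2] at htr; field_simp at htr ⊢; linear_combination htr
  have hjj := congrFun (congrFun hμ j) j'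
  rw [hTdef, Matrix.sum_apply] at hjj
  have hLHS : ∑ σ : G, (ρ1 σ : Matrix (Fin n) (Fin n) ℂ) j i *
        (starRingEnd ℂ) ((ρ1 σ : Matrix (Fin n) (Fin n) ℂ) j' i')
      = μ * (if j = j' then 1 else 0) := by
    have e1 : ∑ σ : G, (ρ1 σ : Matrix (Fin n) (Fin n) ℂ) j i *
        (starRingEnd ℂ) ((ρ1 σ : Matrix (Fin n) (Fin n) ℂ) j' i')
        = ∑ σ : G, ((ρ1 σ : Matrix (Fin n) (Fin n) ℂ) * Matrix.single i i' (1:ℂ)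
            * star (ρ1 σ : Matrix (Fin n) (Fin n) ℂ)) j j' := by
      refine Finset.sum_congr rfl fun σ _ => ?_
      rw [entry_lem, Matrix.star_apply]; rfl
    rw [e1, hjj, Matrix.smul_apply, Matrix.one_apply, smul_eq_mul, mul_ite, mul_one, mul_zero]
  rw [hLHS, hμval]
  ring

lemma sum_comm_dep4 {Λ G M : Type*} [Fintype Λ] [Fintype G] [AddCommMonoid M]
    {κ μ : Λ → Type*} [∀ l, Fintype (κ l)] [∀ l, Fintype (μ l)]
    (f : (l : Λ) → κ l → μ l → G → M) :
    ∑ l, ∑ k, ∑ u, ∑ σ, f l k u σ = ∑ σ, ∑ l, ∑ k, ∑ u, f l k u σ :=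
  calc ∑ l, ∑ k, ∑ u, ∑ σ, f l k u σ
      = ∑ l, ∑ k, ∑ σ, ∑ u, f l k u σ :=
        Finset.sum_congr rfl fun l _ => Finset.sum_congr rfl fun k _ => Finset.sum_comm
    _ = ∑ l, ∑ σ, ∑ k, ∑ u, f l k u σ :=
        Finset.sum_congr rfl fun l _ => Finset.sum_comm
    _ = ∑ σ, ∑ l, ∑ k, ∑ u, f l k u σ := Finset.sum_comm

/-- Well-definedness and unitarity of the quantum Fourier transform over a finite group:
given a complete family of pairwise inequivalent irreducible unitary representations whose
squared dimensions sum to `|G|`, the Fourier transform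
`F(x)(λ)(i, j) = ∑ σ, √(m_λ/|G|) · x(σ) · (ρ_λ(σ))_{j i}` is a bijective linear map
preserving inner products. -/
theorem stmt5 (G : Type*) [Group G] [Fintype G]
    (Λ : Type*) [Fintype Λ] (m : Λ → ℕ) (hm : ∀ l, 0 < m l)
    (ρ : (l : Λ) → G →* Matrix.unitaryGroup (Fin (m l)) ℂ)
    (hirr : ∀ l : Λ, ∀ W : Submodule ℂ (Fin (m l) → ℂ),
        (∀ g : G, ∀ v ∈ W, Matrix.mulVec (ρ l g : Matrix (Fin (m l)) (Fin (m l)) ℂ) v ∈ W) →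
        W = ⊥ ∨ W = ⊤)
    (hineq : ∀ l l' : Λ, l ≠ l' →
        ∀ T : Matrix (Fin (m l)) (Fin (m l')) ℂ,
          (∀ g : G, T * (ρ l' g : Matrix (Fin (m l')) (Fin (m l')) ℂ)
              = (ρ l g : Matrix (Fin (m l)) (Fin (m l)) ℂ) * T) → T = 0)
    (hcard : ∑ l : Λ, (m l) ^ 2 = Fintype.card G)
    (F : (G → ℂ) → ((l : Λ) → Matrix (Fin (m l)) (Fin (m l)) ℂ))
    (hF : ∀ (x : G → ℂ) (l : Λ) (i j : Fin (m l)),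
        F x l i j = ∑ σ : G, (Real.sqrt ((m l : ℝ) / (Fintype.card G : ℝ)) : ℂ) * x σ *
          (ρ l σ : Matrix (Fin (m l)) (Fin (m l)) ℂ) j i) :
    IsLinearMap ℂ F ∧ Function.Bijective F ∧
      ∀ x y : G → ℂ,
        ∑ l : Λ, ∑ i : Fin (m l), ∑ j : Fin (m l),
            (starRingEnd ℂ) (F x l i j) * F y l i j =
          ∑ σ : G, (starRingEnd ℂ) (x σ) * y σ := by
  classical
  have hG0 : 0 < Fintype.card G := Fintype.card_pos
  set cst : Λ → ℂ := fun l => ((Real.sqrt ((m l : ℝ) / (Fintype.card G : ℝ))) : ℂ) with hcst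
  have hc2 : ∀ l, cst l * cst l * ((Fintype.card G : ℂ) / (m l : ℂ)) = 1 := by
    intro l
    have hmne : ((m l : ℂ)) ≠ 0 := Nat.cast_ne_zero.mpr (hm l).ne'
    have hGne : ((Fintype.card G : ℂ)) ≠ 0 := Nat.cast_ne_zero.mpr hG0.ne'
    rw [hcst]
    rw [← Complex.ofReal_mul, Real.mul_self_sqrt (by positivity)]
    push_cast
    field_simp
  set Gm : ((l : Λ) → Matrix (Fin (m l)) (Fin (m l)) ℂ) → (G → ℂ) := fun M σ =>
    ∑ l, ∑ i, ∑ j, cst l * M l i j *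
      (starRingEnd ℂ) ((ρ l σ : Matrix (Fin (m l)) (Fin (m l)) ℂ) j i) with hGm
  -- linearity
  have hlin : IsLinearMap ℂ F := by
    constructor
    · intro x y
      funext l
      ext i j
      simp only [hF, Pi.add_apply, Matrix.add_apply, ← Finset.sum_add_distrib]
      refine Finset.sum_congr rfl fun σ _ => ?_
      ring
    · intro a x
      funext l
      ext i j
      simp only [hF, Pi.smul_apply, Matrix.smul_apply, smul_eq_mul, Finset.mul_sum]
      refine Finset.sum_congr rfl fun σ _ => ?_
      ring
  -- key: F ∘ Gm = id
  have hFG : ∀ M, F (Gm M) = M := by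
    intro M
    funext l
    ext i j
    rw [hF]
    have step1 : ∀ σ : G, (Real.sqrt ((m l : ℝ) / (Fintype.card G : ℝ)) : ℂ) * Gm M σ *
          (ρ l σ : Matrix (Fin (m l)) (Fin (m l)) ℂ) j i
        = ∑ l', ∑ i', ∑ j', cst l * cst l' * M l' i' j' *
            ((ρ l σ : Matrix (Fin (m l)) (Fin (m l)) ℂ) j i *
              (starRingEnd ℂ) ((ρ l' σ : Matrix (Fin (m l')) (Fin (m l'))  ℂ) j' i')) := by
      intro σ
      rw [hGm]
      simp only [Finset.mul_sum, Finset.sum_mul]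
      refine Finset.sum_congr rfl fun l' _ => Finset.sum_congr rfl fun i' _ =>
        Finset.sum_congr rfl fun j' _ => ?_
      ring
    rw [Finset.sum_congr rfl fun σ _ => step1 σ, ← sum_comm_dep4]
    have inner_eq : ∀ l', ∑ i', ∑ j', ∑ σ : G, cst l * cst l' * M l' i' j' *
            ((ρ l σ : Matrix (Fin (m l)) (Fin (m l)) ℂ) j i *
              (starRingEnd ℂ) ((ρ l' σ : Matrix (Fin (m l')) (Fin (m l')) ℂ) j' i'))
        = ∑ i', ∑ j', cst l * cst l' * M l' i' j' *
            (∑ σ : G, (ρ l σ : Matrix (Fin (m l)) (Fin (m l)) ℂ) j i *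
              (starRingEnd ℂ) ((ρ l' σ : Matrix (Fin (m l')) (Fin (m l')) ℂ) j' i')) := by
      intro l'
      exact Finset.sum_congr rfl fun i' _ => Finset.sum_congr rfl fun j' _ =>
        (Finset.mul_sum _ _ _).symm
    rw [Finset.sum_congr rfl fun l' _ => inner_eq l']
    rw [Finset.sum_eq_single l]
    · have hd : ∀ i' j' : Fin (m l), ∑ σ : G,
          (ρ l σ : Matrix (Fin (m l)) (Fin (m l)) ℂ) j i *
            (starRingEnd ℂ) ((ρ l σ : Matrix (Fin (m l)) (Fin (m l)) ℂ) j' i')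
          = (if i = i' then 1 else 0) * (if j = j' then 1 else 0)
              * ((Fintype.card G : ℂ) / (m l : ℂ)) :=
        fun i' j' => schur_diag (hm l) (ρ l) (hirr l) i j i' j'
      simp only [hd]
      simp only [ite_mul, one_mul, zero_mul, mul_ite, mul_zero, Finset.sum_ite_eq,
        Finset.mem_univ, if_true]
      have := hc2 l
      calc cst l * cst l * M l i j * ((Fintype.card G : ℂ) / (m l : ℂ))
          = cst l * cst l * ((Fintype.card G : ℂ) / (m l : ℂ)) * M l i j := by ring
        _ = M l i j := by rw [hc2 l, one_mul]
    · intro l' _ hne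
      have hz : ∀ i' j', ∑ σ : G, (ρ l σ : Matrix (Fin (m l)) (Fin (m l)) ℂ) j i *
            (starRingEnd ℂ) ((ρ l' σ : Matrix (Fin (m l')) (Fin (m l')) ℂ) j' i') = 0 :=
        fun i' j' => schur_off (ρ l) (ρ l') (hineq l l' (Ne.symm hne)) i j i' j'
      simp [hz]
    · intro h
      exact absurd (Finset.mem_univ l) h
  -- adjoint identity
  have hadj : ∀ (x : G → ℂ) (M : (l : Λ) → Matrix (Fin (m l)) (Fin (m l)) ℂ),
      ∑ l, ∑ i, ∑ j, (starRingEnd ℂ) (F x l i j) * M l i j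
        = ∑ σ : G, (starRingEnd ℂ) (x σ) * Gm M σ := by
    intro x M
    have h1 : ∀ (l : Λ) (i j : Fin (m l)), (starRingEnd ℂ) (F x l i j) * M l i j
        = ∑ σ : G, (starRingEnd ℂ) (x σ) * (cst l * M l i j *
            (starRingEnd ℂ) ((ρ l σ : Matrix (Fin (m l)) (Fin (m l)) ℂ) j i)) := by
      intro l i j
      rw [hF, map_sum, Finset.sum_mul]
      refine Finset.sum_congr rfl fun σ _ => ?_
      simp only [_root_.map_mul, Complex.conj_ofReal, hcst]
      ring
    have h2 : ∀ σ : G, (starRingEnd ℂ) (x σ) * Gm M σ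
        = ∑ l, ∑ i, ∑ j, (starRingEnd ℂ) (x σ) * (cst l * M l i j *
            (starRingEnd ℂ) ((ρ l σ : Matrix (Fin (m l)) (Fin (m l)) ℂ) j i)) := by
      intro σ
      rw [hGm]
      simp only [Finset.mul_sum]
    simp only [h1, h2]
    exact sum_comm_dep4 _
  -- dimensions
  have hfin1 : Module.finrank ℂ (G → ℂ) = Fintype.card G := Module.finrank_pi ℂ
  have hfin2 : Module.finrank ℂ ((l : Λ) → Matrix (Fin (m l)) (Fin (m l)) ℂ)
      = Fintype.card G := by
    rw [Module.finrank_pi_fintype ℂ, ← hcard]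
    refine Finset.sum_congr rfl fun l _ => ?_
    rw [Module.finrank_matrix]
    simp [sq]
  set Fl : (G → ℂ) →ₗ[ℂ] ((l : Λ) → Matrix (Fin (m l)) (Fin (m l)) ℂ) :=
    IsLinearMap.mk' F hlin with hFl
  have hsurj : Function.Surjective F := fun M => ⟨Gm M, hFG M⟩
  have hinj : Function.Injective F := by
    have : Function.Injective Fl :=
      (LinearMap.injective_iff_surjective_of_finrank_eq_finrank
        (by rw [hfin1, hfin2])).mpr (by exact hsurj)
    exact this
  have hGF : ∀ y, Gm (F y) = y := fun y => hinj (hFG (F y))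
  refine ⟨hlin, ⟨hinj, hsurj⟩, fun x y => ?_⟩
  rw [hadj x (F y), hGF y]
end

section
/- Let r, d be positive integers, μ the Haar probability measure on the compact group unitaryGroup (Fin r) ℂ, B a complex Banach space, and F : Matrix (Fin r) (Fin d) ℂ → B a continuous function. If M₁, M₂ ∈ Matrix (Fin r) (Fin d) ℂ satisfy M₁ᴴ · M₁ = M₂ᴴ · M₂, then ∫ F(U · M₁) dμ(U) = ∫ F(U · M₂) dμ(U). (Well-definedness of the uniform distribution over the set of purifications Pur(ρ) used in Theorem 1: Haar-averaged quantities do not depend on the chosen base purification.) -/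
open Matrix MeasureTheory

open scoped InnerProductSpace in
/-- Gram equality gives a unitary relating the two matrices. -/
lemma exists_unitary_aux {r d : ℕ} (M₁ M₂ : Matrix (Fin r) (Fin d) ℂ)
    (h : M₁ᴴ * M₁ = M₂ᴴ * M₂) :
    ∃ W ∈ Matrix.unitaryGroup (Fin r) ℂ, W * M₁ = M₂ := by
  classical
  have hmul : ∀ {p q s : ℕ} (A : Matrix (Fin p) (Fin q) ℂ) (B : Matrix (Fin q) (Fin s) ℂ),
      Matrix.toEuclideanLin (A * B) =
        (Matrix.toEuclideanLin A).comp (Matrix.toEuclideanLin B) := by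
    intro p q s A B
    apply LinearMap.ext
    intro v
    simp [Matrix.toEuclideanLin_apply, Matrix.mulVec_mulVec]
  set T₁ := Matrix.toEuclideanLin M₁ with hT₁
  set T₂ := Matrix.toEuclideanLin M₂ with hT₂
  have hinner : ∀ x y : EuclideanSpace ℂ (Fin d), ⟪T₁ x, T₁ y⟫_ℂ = ⟪T₂ x, T₂ y⟫_ℂ := by
    have key : ∀ (M : Matrix (Fin r) (Fin d) ℂ) (x y : EuclideanSpace ℂ (Fin d)),
        ⟪Matrix.toEuclideanLin M x, Matrix.toEuclideanLin M y⟫_ℂ =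
          ⟪x, Matrix.toEuclideanLin (Mᴴ * M) y⟫_ℂ := by
      intro M x y
      rw [hmul, LinearMap.comp_apply, Matrix.toEuclideanLin_conjTranspose_eq_adjoint,
        LinearMap.adjoint_inner_right]
    intro x y
    rw [hT₁, hT₂, key M₁, key M₂, h]
  have hker : LinearMap.ker T₁ ≤ LinearMap.ker T₂ := by
    intro x hx
    rw [LinearMap.mem_ker] at hx ⊢
    have h0 : ⟪T₂ x, T₂ x⟫_ℂ = 0 := by rw [← hinner, hx, inner_zero_left]
    exact inner_self_eq_zero.mp h0
  let L0 : LinearMap.range T₁ →ₗ[ℂ] EuclideanSpace ℂ (Fin r) :=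
    ((LinearMap.ker T₁).liftQ T₂ hker).comp (LinearMap.quotKerEquivRange T₁).symm.toLinearMap
  have hL0 : ∀ x : EuclideanSpace ℂ (Fin d),
      L0 ⟨T₁ x, LinearMap.mem_range_self _ x⟩ = T₂ x := by
    intro x
    have hq : (LinearMap.quotKerEquivRange T₁).symm ⟨T₁ x, LinearMap.mem_range_self _ x⟩ =
        Submodule.Quotient.mk x := by
      rw [LinearEquiv.symm_apply_eq]
      exact Subtype.ext (LinearMap.quotKerEquivRange_apply_mk T₁ x).symm
    simp only [L0, LinearMap.comp_apply, LinearEquiv.coe_toLinearMap, hq, Submodule.liftQ_apply]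
  have hnorm : ∀ s : LinearMap.range T₁, ‖L0 s‖ = ‖s‖ := by
    rintro ⟨s, x, rfl⟩
    have h1 : ⟪T₁ x, T₁ x⟫_ℂ = ⟪T₂ x, T₂ x⟫_ℂ := hinner x x
    rw [inner_self_eq_norm_sq_to_K, inner_self_eq_norm_sq_to_K] at h1
    have h2 : ‖T₁ x‖ ^ 2 = ‖T₂ x‖ ^ 2 := by exact_mod_cast h1
    have h3 : ‖T₁ x‖ = ‖T₂ x‖ := by
      nlinarith [norm_nonneg (T₁ x), norm_nonneg (T₂ x)]
    calc ‖L0 ⟨T₁ x, ⟨x, rfl⟩⟩‖ = ‖T₂ x‖ := by rw [hL0 x]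
      _ = ‖T₁ x‖ := h3.symm
      _ = ‖(⟨T₁ x, ⟨x, rfl⟩⟩ : LinearMap.range T₁)‖ := rfl
  let L : LinearMap.range T₁ →ₗᵢ[ℂ] EuclideanSpace ℂ (Fin r) := ⟨L0, hnorm⟩
  let f : EuclideanSpace ℂ (Fin r) →ₗᵢ[ℂ] EuclideanSpace ℂ (Fin r) := L.extend
  have hf : ∀ x : EuclideanSpace ℂ (Fin d), f (T₁ x) = T₂ x := by
    intro x
    have := L.extend_apply ⟨T₁ x, LinearMap.mem_range_self _ x⟩
    rw [show ((⟨T₁ x, LinearMap.mem_range_self _ x⟩ : LinearMap.range T₁) :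
        EuclideanSpace ℂ (Fin r)) = T₁ x from rfl] at this
    rw [this]
    exact hL0 x
  set W : Matrix (Fin r) (Fin r) ℂ := Matrix.toEuclideanLin.symm f.toLinearMap with hWdef
  have hWlin : Matrix.toEuclideanLin W = f.toLinearMap := by
    rw [hWdef, LinearEquiv.apply_symm_apply]
  have hone : Matrix.toEuclideanLin (1 : Matrix (Fin r) (Fin r) ℂ) = LinearMap.id := by
    apply LinearMap.ext
    intro v
    simp [Matrix.toEuclideanLin_apply, Matrix.one_mulVec]
  refine ⟨W, ?_, ?_⟩
  · rw [Matrix.mem_unitaryGroup_iff']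
    apply Matrix.toEuclideanLin.injective
    rw [Matrix.star_eq_conjTranspose, hmul, hone, hWlin,
      Matrix.toEuclideanLin_conjTranspose_eq_adjoint, hWlin]
    apply LinearMap.ext
    intro v
    apply ext_inner_right ℂ
    intro w
    rw [LinearMap.comp_apply, LinearMap.adjoint_inner_left]
    simp only [LinearIsometry.coe_toLinearMap, LinearMap.id_coe, id_eq]
    exact f.inner_map_map v w
  · apply Matrix.toEuclideanLin.injective
    rw [hmul, hWlin]
    apply LinearMap.ext
    intro v
    exact hf v

set_option maxHeartbeats 1000000 in
/-- Well-definedness of the uniform distribution over purifications: Haar averages of a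
continuous function over the unitary orbit do not depend on the chosen base purification. -/
theorem stmt7 (r d : ℕ) (hr : 0 < r) (hd : 0 < d)
    [MeasurableSpace (Matrix.unitaryGroup (Fin r) ℂ)]
    [BorelSpace (Matrix.unitaryGroup (Fin r) ℂ)]
    (μ : Measure (Matrix.unitaryGroup (Fin r) ℂ))
    [μ.IsHaarMeasure] [IsProbabilityMeasure μ]
    (B : Type*) [NormedAddCommGroup B] [NormedSpace ℂ B] [CompleteSpace B]
    (F : Matrix (Fin r) (Fin d) ℂ → B) (hF : Continuous F)
    (M₁ M₂ : Matrix (Fin r) (Fin d) ℂ)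
    (h : M₁ᴴ * M₁ = M₂ᴴ * M₂) :
    ∫ U : Matrix.unitaryGroup (Fin r) ℂ, F ((U : Matrix (Fin r) (Fin r) ℂ) * M₁) ∂μ =
      ∫ U : Matrix.unitaryGroup (Fin r) ℂ, F ((U : Matrix (Fin r) (Fin r) ℂ) * M₂) ∂μ := by
  obtain ⟨W, hWmem, hW⟩ := exists_unitary_aux M₁ M₂ h
  -- topological group structure
  haveI : ContinuousMul (Matrix.unitaryGroup (Fin r) ℂ) := by
    constructor
    apply Continuous.subtype_mk
    exact (continuous_subtype_val.comp continuous_fst).matrix_mul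
      (continuous_subtype_val.comp continuous_snd)
  haveI : ContinuousInv (Matrix.unitaryGroup (Fin r) ℂ) := by
    constructor
    apply Continuous.subtype_mk
    have h1 : Continuous fun U : Matrix.unitaryGroup (Fin r) ℂ => star (U : Matrix (Fin r) (Fin r) ℂ) :=
      continuous_subtype_val.star
    convert h1 using 1
  haveI : IsTopologicalGroup (Matrix.unitaryGroup (Fin r) ℂ) := ⟨⟩
  haveI : CompactSpace (Matrix.unitaryGroup (Fin r) ℂ) := by
    have hclosed : IsClosed ((Matrix.unitaryGroup (Fin r) ℂ) : Set (Matrix (Fin r) (Fin r) ℂ)) := by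
      have : ((Matrix.unitaryGroup (Fin r) ℂ) : Set (Matrix (Fin r) (Fin r) ℂ)) =
          {A | star A * A = 1} ∩ {A | A * star A = 1} := by
        ext A
        simp [Unitary.mem_iff, Set.mem_setOf_eq, Set.mem_inter_iff]
      rw [this]
      exact ((isClosed_singleton.preimage (continuous_star.matrix_mul continuous_id)).inter
        (isClosed_singleton.preimage (continuous_id.matrix_mul continuous_star)))
    have hcomp : IsCompact ((Matrix.unitaryGroup (Fin r) ℂ) : Set (Matrix (Fin r) (Fin r) ℂ)) := by
      have hbig : IsCompact (Set.pi Set.univ fun _ : Fin r =>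
          Set.pi Set.univ fun _ : Fin r => Metric.closedBall (0 : ℂ) 1) :=
        isCompact_univ_pi fun _ => isCompact_univ_pi fun _ => isCompact_closedBall 0 1
      apply hbig.of_isClosed_subset hclosed
      intro A hA
      refine Set.mem_univ_pi.mpr fun i => Set.mem_univ_pi.mpr fun j => ?_
      rw [Metric.mem_closedBall, dist_zero_right]
      exact entry_norm_bound_of_unitary hA i j
    exact isCompact_iff_compactSpace.mp hcomp
  haveI : SecondCountableTopology (Matrix (Fin r) (Fin r) ℂ) :=
    inferInstanceAs (SecondCountableTopology (Fin r → Fin r → ℂ))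
  haveI : SecondCountableTopology (Matrix.unitaryGroup (Fin r) ℂ) :=
    TopologicalSpace.secondCountableTopology_induced _ _
      (Subtype.val : Matrix.unitaryGroup (Fin r) ℂ → Matrix (Fin r) (Fin r) ℂ)
  -- right invariance via uniqueness of Haar probability measures
  let W' : Matrix.unitaryGroup (Fin r) ℂ := ⟨W, hWmem⟩
  have hmeas : Measurable fun U : Matrix.unitaryGroup (Fin r) ℂ => U * W' :=
    (continuous_id.mul continuous_const).measurable
  have hmap : μ.map (· * W') = μ := by
    haveI : IsProbabilityMeasure (μ.map (· * W')) :=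
      Measure.isProbabilityMeasure_map hmeas.aemeasurable
    exact Measure.isHaarMeasure_eq_of_isProbabilityMeasure _ μ
  have hgcont : Continuous fun U : Matrix.unitaryGroup (Fin r) ℂ => F ((U : Matrix (Fin r) (Fin r) ℂ) * M₁) :=
    hF.comp (continuous_subtype_val.matrix_mul continuous_const)
  have key : ∫ U : Matrix.unitaryGroup (Fin r) ℂ, F ((U : Matrix (Fin r) (Fin r) ℂ) * M₁) ∂μ =
      ∫ U : Matrix.unitaryGroup (Fin r) ℂ, F (((U * W' : Matrix.unitaryGroup (Fin r) ℂ) : Matrix (Fin r) (Fin r) ℂ) * M₁) ∂μ := by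
    conv_lhs => rw [← hmap]
    exact integral_map hmeas.aemeasurable
      (by rw [hmap]; exact hgcont.aestronglyMeasurable)
  rw [key]
  congr 1
  funext U
  congr 1
  show ((U : Matrix (Fin r) (Fin r) ℂ) * W) * M₁ = (U : Matrix (Fin r) (Fin r) ℂ) * M₂
  rw [Matrix.mul_assoc, hW]
end

section
/- Let e, o be positive integers and X a complex square matrix indexed by (Fin e × Fin o). Then the trace norm of the partial trace over the first factor is bounded by the trace norm of X: ‖Tr_E X‖₁ ≤ ‖X‖₁. (The data-processing inequality for the trace norm under partial trace, used in the proof of Theorem 5 to discard the environment systems.) -/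
open Matrix ComplexOrder

/-- The trace norm of a complex square matrix: the trace of the positive semidefinite
square root of `AᴴA` (i.e. the sum of the singular values of `A`), as a real number. -/
noncomputable def traceNorm {m : Type*} [Fintype m] [DecidableEq m]
    (A : Matrix m m ℂ) : ℝ :=
  (((Matrix.posSemidef_conjTranspose_mul_self A).1.eigenvectorUnitary.1 *
      diagonal (((↑) : ℝ → ℂ) ∘ (√·) ∘ (Matrix.posSemidef_conjTranspose_mul_self A).1.eigenvalues) *
      (star (Matrix.posSemidef_conjTranspose_mul_self A).1.eigenvectorUnitary :
        Matrix m m ℂ)).trace).re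

/-- The partial trace over the first (environment) tensor factor. -/
noncomputable def partialTraceE {e o : ℕ} (X : Matrix (Fin e × Fin o) (Fin e × Fin o) ℂ) :
    Matrix (Fin o) (Fin o) ℂ :=
  fun j j' => ∑ i : Fin e, X (i, j) (i, j')

section Aux

variable {n : Type*} [Fintype n] [DecidableEq n]

private lemma conj_diag {V : Matrix n n ℂ} (hV : star V * V = 1) (f g : n → ℂ) :
    (V * diagonal f * star V) * (V * diagonal g * star V) =
      V * diagonal (fun i => f i * g i) * star V := by
  have : (V * diagonal f * star V) * (V * diagonal g * star V)
      = V * (diagonal f * ((star V * V) * (diagonal g * star V))) := by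
    simp only [Matrix.mul_assoc]
  rw [this, hV, Matrix.one_mul, ← Matrix.mul_assoc (diagonal f), diagonal_mul_diagonal,
    ← Matrix.mul_assoc]

private lemma re_diag_le_one {M : Matrix n n ℂ} (h : (1 - M).PosSemidef) (i : n) :
    (M i i).re ≤ 1 := by
  have h0 := h.re_dotProduct_nonneg (Pi.single i 1)
  have hd : dotProduct (star (Pi.single i 1 : n → ℂ)) ((1 - M) *ᵥ Pi.single i 1)
      = 1 - M i i := by
    simp [dotProduct, mulVec, Pi.single_apply, mul_ite, ite_mul, Finset.sum_ite_eq,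
      Finset.sum_ite_eq', Matrix.sub_apply, one_apply]
  rw [hd] at h0
  simp only [RCLike.re_to_complex, Complex.sub_re, Complex.one_re] at h0
  linarith

omit [DecidableEq n] in
private lemma cauchy_schwarz_cvec (u w : n → ℂ) :
    ‖∑ k, (starRingEnd ℂ) (u k) * w k‖ ≤
      Real.sqrt (∑ k, ‖u k‖ ^ 2) * Real.sqrt (∑ k, ‖w k‖ ^ 2) := by
  have h := norm_inner_le_norm (𝕜 := ℂ) ((WithLp.equiv 2 (n → ℂ)).symm u)
      ((WithLp.equiv 2 (n → ℂ)).symm w)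
  rw [WithLp.equiv_symm_apply, EuclideanSpace.inner_toLp_toLp, EuclideanSpace.norm_eq, EuclideanSpace.norm_eq] at h
  simpa [dotProduct, mul_comm] using h

private lemma traceNorm_eq_sum (A : Matrix n n ℂ) :
    traceNorm A = ∑ i, Real.sqrt ((Matrix.posSemidef_conjTranspose_mul_self A).1.eigenvalues i) := by
  unfold traceNorm
  rw [Matrix.trace_mul_cycle]
  set V := (Matrix.posSemidef_conjTranspose_mul_self A).1.eigenvectorUnitary
  have hV : (star V.1 : Matrix n n ℂ) * V.1 = 1 := Matrix.mem_unitaryGroup_iff'.mp V.2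
  rw [hV, Matrix.one_mul, Matrix.trace_diagonal]
  simp [Complex.ofReal_sum]

private lemma unconj {V : Matrix n n ℂ} (hV1 : star V * V = 1) (M : Matrix n n ℂ) :
    star V * (V * M * star V) * V = M := by
  have h1 : star V * (V * M * star V) * V = star V * V * M * (star V * V) := by
    simp only [Matrix.mul_assoc]
  rw [h1, hV1, Matrix.one_mul, Matrix.mul_one]

omit [DecidableEq n] in
private lemma col_norm_sum (X : Matrix n n ℂ) (i : n) :
    ((Xᴴ * X) i i) = ((∑ k, ‖X k i‖ ^ 2 : ℝ) : ℂ) := by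
  rw [Matrix.mul_apply, Complex.ofReal_sum]
  congr 1 with k
  rw [Matrix.conjTranspose_apply, RCLike.star_def, Complex.conj_mul', Complex.ofReal_pow]

/-- Dual bound: for any contraction `B` (i.e. `B Bᴴ ≤ 1`), `Re Tr (B A) ≤ ‖A‖₁`. -/
private lemma trace_mul_re_le (A B : Matrix n n ℂ) (hB : (1 - B * Bᴴ).PosSemidef) :
    (Matrix.trace (B * A)).re ≤ traceNorm A := by
  set hH := Matrix.posSemidef_conjTranspose_mul_self A with hHdef
  set V : Matrix n n ℂ := (hH.1.eigenvectorUnitary : Matrix n n ℂ) with hVdef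
  set d := hH.1.eigenvalues with hddef
  have hV1 : star V * V = 1 := Matrix.mem_unitaryGroup_iff'.mp hH.1.eigenvectorUnitary.2
  have hV2 : V * star V = 1 := Matrix.mem_unitaryGroup_iff.mp hH.1.eigenvectorUnitary.2
  have htr : Matrix.trace (B * A) = Matrix.trace (star V * (B * A) * V) := by
    rw [Matrix.trace_mul_cycle, ← Matrix.mul_assoc, hV2, Matrix.one_mul]
  set u : n → n → ℂ := fun i k => (Bᴴ * V) k i with hudef
  set w : n → n → ℂ := fun i k => (A * V) k i with hwdef
  have hentry : ∀ i, (star V * (B * A) * V) i i = ∑ k, (starRingEnd ℂ) (u i k) * w i k := by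
    intro i
    have hmat : star V * (B * A) * V = (Bᴴ * V)ᴴ * (A * V) := by
      simp [Matrix.conjTranspose_mul, Matrix.mul_assoc, Matrix.star_eq_conjTranspose]
    rw [hmat, Matrix.mul_apply]
    simp [Matrix.conjTranspose_apply, hudef, hwdef]
  have hw : ∀ i, ∑ k, ‖w i k‖ ^ 2 = d i := by
    intro i
    have h1 : (A * V)ᴴ * (A * V) = diagonal (RCLike.ofReal ∘ d) := by
      have h2 : (A * V)ᴴ * (A * V) = star V * (Aᴴ * A) * V := by
        simp [Matrix.conjTranspose_mul, Matrix.mul_assoc, Matrix.star_eq_conjTranspose]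
      rw [h2]
      conv_lhs => rw [hH.1.spectral_theorem]
      exact unconj hV1 _
    have h3 := col_norm_sum (A * V) i
    rw [h1] at h3
    have h4 : (diagonal (RCLike.ofReal ∘ d)) i i = ((d i : ℝ) : ℂ) := by
      simp [Matrix.diagonal_apply_eq]
    rw [h4] at h3
    exact_mod_cast h3.symm
  have hu : ∀ i, ∑ k, ‖u i k‖ ^ 2 ≤ 1 := by
    intro i
    have h1 : (Bᴴ * V)ᴴ * (Bᴴ * V) = star V * (B * Bᴴ) * V := by
      simp [Matrix.conjTranspose_mul, Matrix.mul_assoc, Matrix.star_eq_conjTranspose]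
    have hpsd : (1 - star V * (B * Bᴴ) * V).PosSemidef := by
      have h5 := hB.conjTranspose_mul_mul_same V
      rw [← Matrix.star_eq_conjTranspose] at h5
      have h6 : star V * (1 - B * Bᴴ) * V = 1 - star V * (B * Bᴴ) * V := by
        rw [Matrix.mul_sub, Matrix.mul_one, Matrix.sub_mul, hV1]
      rwa [h6] at h5
    have h3 := col_norm_sum (Bᴴ * V) i
    rw [h1] at h3
    have h4 := re_diag_le_one hpsd i
    rw [h3, Complex.ofReal_re] at h4
    exact h4
  rw [htr, Matrix.trace, traceNorm_eq_sum]
  simp only [Matrix.diag]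
  rw [Complex.re_sum]
  apply Finset.sum_le_sum
  intro i _
  calc ((star V * (B * A) * V) i i).re ≤ ‖(star V * (B * A) * V) i i‖ :=
        by simpa using RCLike.re_le_norm ((star V * (B * A) * V) i i)
    _ = ‖∑ k, (starRingEnd ℂ) (u i k) * w i k‖ := by rw [hentry i]
    _ ≤ Real.sqrt (∑ k, ‖u i k‖ ^ 2) * Real.sqrt (∑ k, ‖w i k‖ ^ 2) :=
        cauchy_schwarz_cvec _ _
    _ ≤ 1 * Real.sqrt (d i) := by
        apply mul_le_mul
        · rw [show (1:ℝ) = Real.sqrt 1 by simp]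
          exact Real.sqrt_le_sqrt (hu i)
        · rw [hw i]
        · exact Real.sqrt_nonneg _
        · exact zero_le_one
    _ = Real.sqrt (d i) := one_mul _

/-- Achievability: there is a contraction `B` with `Tr (B A) = ‖A‖₁`. -/
private lemma exists_dual (A : Matrix n n ℂ) :
    ∃ B : Matrix n n ℂ, (1 - B * Bᴴ).PosSemidef ∧
      Matrix.trace (B * A) = ((traceNorm A : ℝ) : ℂ) := by
  set hH := Matrix.posSemidef_conjTranspose_mul_self A with hHdef
  set V : Matrix n n ℂ := (hH.1.eigenvectorUnitary : Matrix n n ℂ) with hVdef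
  set d := hH.1.eigenvalues with hddef
  have hdnn : ∀ i, 0 ≤ d i := hH.eigenvalues_nonneg
  have hV1 : star V * V = 1 := Matrix.mem_unitaryGroup_iff'.mp hH.1.eigenvectorUnitary.2
  have hV2 : V * star V = 1 := Matrix.mem_unitaryGroup_iff.mp hH.1.eigenvectorUnitary.2
  set g : n → ℂ := fun i => ((if d i = 0 then 0 else (Real.sqrt (d i))⁻¹ : ℝ) : ℂ) with hgdef
  set S : Matrix n n ℂ := V * diagonal g * star V with hSdef
  have hgstar : star g = g := by
    funext i
    simp [hgdef, Complex.conj_ofReal]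
  have hSherm : Sᴴ = S := by
    have hg : (diagonal g)ᴴ = diagonal g := by
      rw [diagonal_conjTranspose, hgstar]
    simp [hSdef, Matrix.star_eq_conjTranspose, Matrix.conjTranspose_mul, hg, Matrix.mul_assoc]
  refine ⟨S * Aᴴ, ?_, ?_⟩
  · have hBB : (S * Aᴴ) * (S * Aᴴ)ᴴ = S * (Aᴴ * A) * S := by
      rw [Matrix.conjTranspose_mul, Matrix.conjTranspose_conjTranspose, hSherm]
      simp only [Matrix.mul_assoc]
    have hspec : Aᴴ * A = V * diagonal (RCLike.ofReal ∘ d) * star V := hH.1.spectral_theorem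
    have hprod : S * (Aᴴ * A) * S =
        V * diagonal (fun i => g i * (RCLike.ofReal ∘ d) i * g i) * star V := by
      rw [hspec, hSdef, Matrix.mul_assoc (V * diagonal g * star V), ← Matrix.mul_assoc]
      rw [conj_diag hV1, conj_diag hV1]
    have hone : (1 : Matrix n n ℂ) = V * diagonal (fun _ => 1) * star V := by
      rw [diagonal_one, Matrix.mul_one, hV2]
    have hsub : 1 - (S * Aᴴ) * (S * Aᴴ)ᴴ =
        V * diagonal (fun i => 1 - g i * (RCLike.ofReal ∘ d) i * g i) * star V := by
      rw [hBB, hprod]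
      conv_lhs => rw [hone]
      rw [← Matrix.sub_mul, ← Matrix.mul_sub, Matrix.diagonal_sub]
    rw [hsub, Matrix.star_eq_conjTranspose V]
    apply Matrix.PosSemidef.mul_mul_conjTranspose_same
    · refine Matrix.posSemidef_diagonal_iff.mpr fun i => ?_
      by_cases hdi : d i = 0
      · simp [hgdef, hdi]
      · have hd0 : 0 < d i := lt_of_le_of_ne (hdnn i) (Ne.symm hdi)
        have hs0 : Real.sqrt (d i) ≠ 0 := ne_of_gt (Real.sqrt_pos.mpr hd0)
        have hr : (Real.sqrt (d i))⁻¹ * d i * (Real.sqrt (d i))⁻¹ = 1 := by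
          field_simp
          rw [Real.sq_sqrt (hdnn i)]
        have : g i * (RCLike.ofReal ∘ d) i * g i = 1 := by
          simp only [hgdef, if_neg hdi, Function.comp_apply]
          show ((((√(d i))⁻¹ : ℝ)) : ℂ) * ((d i : ℝ) : ℂ) * (((√(d i))⁻¹ : ℝ) : ℂ) = 1
          exact_mod_cast hr
        rw [this]
        simp
  · have hspec : Aᴴ * A = V * diagonal (RCLike.ofReal ∘ d) * star V := hH.1.spectral_theorem
    have h1 : (S * Aᴴ) * A = V * diagonal (fun i => g i * (RCLike.ofReal ∘ d) i) * star V := by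
      rw [Matrix.mul_assoc, hspec, hSdef, conj_diag hV1]
    rw [h1, Matrix.trace_mul_cycle, hV1, Matrix.one_mul,
      Matrix.trace_diagonal, traceNorm_eq_sum]
    rw [Complex.ofReal_sum]
    apply Finset.sum_congr rfl
    intro i _
    show g i * ((d i : ℝ) : ℂ) = ((Real.sqrt (d i) : ℝ) : ℂ)
    by_cases hdi : d i = 0
    · simp [hgdef, hdi]
    · have hd0 : 0 < d i := lt_of_le_of_ne (hdnn i) (Ne.symm hdi)
      have hs0 : Real.sqrt (d i) ≠ 0 := ne_of_gt (Real.sqrt_pos.mpr hd0)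
      have hr : (Real.sqrt (d i))⁻¹ * d i = Real.sqrt (d i) := by
        rw [inv_mul_eq_div, eq_comm, eq_div_iff hs0, Real.mul_self_sqrt (hdnn i)]
      simp only [hgdef, if_neg hdi]
      exact_mod_cast hr

end Aux

section Embed

variable {e o : ℕ}

/-- Tensoring an operator on the second factor with the identity on the first. -/
private def embedE (e : ℕ) {o : ℕ} (B : Matrix (Fin o) (Fin o) ℂ) :
    Matrix (Fin e × Fin o) (Fin e × Fin o) ℂ :=
  fun p q => if p.1 = q.1 then B p.2 q.2 else 0

private lemma embedE_mul (B C : Matrix (Fin o) (Fin o) ℂ) :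
    embedE e B * embedE e C = embedE e (B * C) := by
  ext ⟨i, j⟩ ⟨i', j'⟩
  simp only [Matrix.mul_apply, embedE, Fintype.sum_prod_type]
  by_cases h : i = i'
  · subst h
    simp [Finset.sum_ite_eq, Finset.sum_ite_eq']
  · simp [h, Finset.sum_ite_eq, Finset.sum_ite_eq']

private lemma embedE_conjTranspose (B : Matrix (Fin o) (Fin o) ℂ) :
    (embedE e B)ᴴ = embedE e Bᴴ := by
  ext ⟨i, j⟩ ⟨i', j'⟩
  simp only [Matrix.conjTranspose_apply, embedE]
  by_cases h : i = i'
  · subst h; simp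
  · simp [h, Ne.symm h]

private lemma embedE_one : embedE e (1 : Matrix (Fin o) (Fin o) ℂ) = 1 := by
  ext ⟨i, j⟩ ⟨i', j'⟩
  simp only [embedE, Matrix.one_apply, Prod.mk.injEq]
  by_cases h : i = i' <;> by_cases h' : j = j' <;> simp [h, h']

private lemma embedE_sub (B C : Matrix (Fin o) (Fin o) ℂ) :
    embedE e (B - C) = embedE e B - embedE e C := by
  ext ⟨i, j⟩ ⟨i', j'⟩
  simp only [embedE, Matrix.sub_apply]
  by_cases h : i = i' <;> simp [h]

private lemma embedE_posSemidef {M : Matrix (Fin o) (Fin o) ℂ} (h : M.PosSemidef) :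
    (embedE e M).PosSemidef := by
  refine Matrix.PosSemidef.of_dotProduct_mulVec_nonneg ?_ ?_
  · rw [Matrix.IsHermitian, embedE_conjTranspose, h.1]
  · intro v
    have hq : dotProduct (star v) (embedE e M *ᵥ v) =
        ∑ i : Fin e, dotProduct (star (fun j => v (i, j))) (M *ᵥ (fun j => v (i, j))) := by
      simp only [dotProduct, mulVec, embedE, Fintype.sum_prod_type, Pi.star_apply, ite_mul,
        zero_mul, Finset.sum_ite_irrel, Finset.sum_const_zero, Finset.sum_ite_eq,
        Finset.mem_univ, if_true]
    rw [hq]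
    exact Finset.sum_nonneg fun i _ => h.dotProduct_mulVec_nonneg _

private lemma trace_embedE_mul (B : Matrix (Fin o) (Fin o) ℂ)
    (X : Matrix (Fin e × Fin o) (Fin e × Fin o) ℂ) :
    Matrix.trace (embedE e B * X) = Matrix.trace (B * partialTraceE X) := by
  simp only [Matrix.trace, Matrix.diag, Matrix.mul_apply, embedE, partialTraceE,
    Fintype.sum_prod_type, ite_mul, zero_mul, Finset.sum_ite_irrel, Finset.sum_const_zero,
    Finset.sum_ite_eq, Finset.mem_univ, if_true, Finset.mul_sum]
  rw [Finset.sum_comm]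
  exact Finset.sum_congr rfl fun j _ => Finset.sum_comm

end Embed

/-- Data-processing inequality for the trace norm under partial trace. -/
theorem stmt13 (e o : ℕ) (he : 0 < e) (ho : 0 < o)
    (X : Matrix (Fin e × Fin o) (Fin e × Fin o) ℂ) :
    traceNorm (partialTraceE X) ≤ traceNorm X := by
  obtain ⟨B, hB, hBtr⟩ := exists_dual (partialTraceE X)
  have hcontr : (1 - embedE e B * (embedE e B)ᴴ).PosSemidef := by
    rw [embedE_conjTranspose, embedE_mul, ← embedE_one (e := e), ← embedE_sub]
    exact embedE_posSemidef hB
  have h := trace_mul_re_le X (embedE e B) hcontr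
  rwa [trace_embedE_mul, hBtr, Complex.ofReal_re] at h
end

section
/- Let d_I, d_O, r be positive integers and K, L : Fin r → Matrix (Fin d_O) (Fin d_I) ℂ two families of Kraus operators representing the same linear map: Σ_{e} K_e · X · K_eᴴ = Σ_{e} L_e · X · L_eᴴ for all X ∈ Matrix (Fin d_I) (Fin d_I) ℂ. Then there exists a unitary u ∈ unitaryGroup (Fin r) ℂ such that L_e = Σ_{f} u(e, f) • K_f for all e ∈ Fin r. (Unitary freedom of Kraus/Stinespring representations with environment of fixed dimension r, which makes the set Dil(Λ) of Theorem 2 a single orbit of the unitary group U(r) acting on the environment.) -/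
open Matrix
open scoped InnerProductSpace

lemma key {m : Type*} [Fintype m] [DecidableEq m] (r : ℕ) (A B : Matrix m (Fin r) ℂ) (h : A * Aᴴ = B * Bᴴ) :
    ∃ U ∈ Matrix.unitaryGroup (Fin r) ℂ, B = A * U := by
  set S : EuclideanSpace ℂ m →ₗ[ℂ] EuclideanSpace ℂ (Fin r) := Matrix.toEuclideanLin Aᴴ with hS
  set T : EuclideanSpace ℂ m →ₗ[ℂ] EuclideanSpace ℂ (Fin r) := Matrix.toEuclideanLin Bᴴ with hT
  have hinner : ∀ x y : EuclideanSpace ℂ m, ⟪S x, S y⟫_ℂ = ⟪T x, T y⟫_ℂ := by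
    intro x y
    rw [hS, hT]
    simp only [Matrix.toEuclideanLin_apply, EuclideanSpace.inner_toLp_toLp,
      Matrix.star_mulVec, Matrix.conjTranspose_conjTranspose, Matrix.dotProduct_mulVec,
      Matrix.vecMul_vecMul, h]
    simp only [dotProduct_comm (Aᴴ *ᵥ _), dotProduct_comm (Bᴴ *ᵥ _),
      Matrix.dotProduct_mulVec, Matrix.vecMul_vecMul, h]
  have hnorm : ∀ x, ‖S x‖ = ‖T x‖ := by
    intro x
    rw [@norm_eq_sqrt_re_inner ℂ, @norm_eq_sqrt_re_inner ℂ, hinner]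
  have hker : LinearMap.ker S = LinearMap.ker T := by
    ext x
    simp only [LinearMap.mem_ker, ← norm_eq_zero (a := S x), ← norm_eq_zero (a := T x), hnorm]
  let Tbar : (EuclideanSpace ℂ m ⧸ LinearMap.ker S) →ₗ[ℂ] EuclideanSpace ℂ (Fin r) :=
    (LinearMap.ker S).liftQ T (hker.le)
  let e := LinearMap.quotKerEquivRange S
  let f : LinearMap.range S →ₗ[ℂ] EuclideanSpace ℂ (Fin r) := Tbar ∘ₗ (e.symm : _ →ₗ[ℂ] _)
  have hf : ∀ x : EuclideanSpace ℂ m, ∀ hx, f ⟨S x, hx⟩ = T x := by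
    intro x hx
    have h1 : e (Submodule.Quotient.mk x) = ⟨S x, hx⟩ := by
      apply Subtype.ext
      simp [e, LinearMap.quotKerEquivRange]
    have h2 : e.symm ⟨S x, hx⟩ = Submodule.Quotient.mk x := by
      rw [← h1, LinearEquiv.symm_apply_apply]
    simp only [f, LinearMap.comp_apply, LinearEquiv.coe_coe, h2]
    rfl
  have hfi : ∀ n : LinearMap.range S, ‖f n‖ = ‖n‖ := by
    rintro ⟨-, x, rfl⟩
    rw [hf x ⟨x, rfl⟩, ← hnorm]
    rfl
  let φ : LinearMap.range S →ₗᵢ[ℂ] EuclideanSpace ℂ (Fin r) := ⟨f, hfi⟩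
  let Φ : EuclideanSpace ℂ (Fin r) →ₗᵢ[ℂ] EuclideanSpace ℂ (Fin r) := φ.extend
  have hΦ : ∀ x, Φ (S x) = T x := fun x =>
    (φ.extend_apply ⟨S x, ⟨x, rfl⟩⟩).trans (hf x ⟨x, rfl⟩)
  set M : Matrix (Fin r) (Fin r) ℂ := Matrix.toEuclideanLin.symm Φ.toLinearMap with hM
  have hΦM : ∀ x, Φ x = Matrix.toEuclideanLin M x := by
    intro x; rw [hM, LinearEquiv.apply_symm_apply]; rfl
  have hmul : Matrix.toEuclideanLin (M * Aᴴ) =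
      (Matrix.toEuclideanLin M) ∘ₗ (Matrix.toEuclideanLin Aᴴ) := by
    simp only [Matrix.toEuclideanLin_eq_toLin_orthonormal]
    exact Matrix.toLin_mul _ _ _ M Aᴴ
  have hMA : M * Aᴴ = Bᴴ := by
    apply Matrix.toEuclideanLin.injective
    rw [hmul]
    ext x : 1
    have := hΦ x
    rw [hΦM] at this
    exact this
  have hMu : Mᴴ * M = 1 := by
    ext i j
    have := Φ.inner_map_map (EuclideanSpace.single i (1:ℂ)) (EuclideanSpace.single j (1:ℂ))
    rw [hΦM, hΦM] at this
    simp only [Matrix.toEuclideanLin_apply, EuclideanSpace.inner_toLp_toLp,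
      Matrix.star_mulVec, Matrix.dotProduct_mulVec, Matrix.vecMul_vecMul] at this
    rw [EuclideanSpace.ofLp_single, EuclideanSpace.ofLp_single] at this
    have hst : star (Pi.single i (1:ℂ) : Fin r → ℂ) = Pi.single i 1 := by
      ext k; simp [Pi.single_apply, apply_ite]
    rw [hst] at this
    simp only [Pi.single_star, star_one, Matrix.single_vecMul, one_mul,
      single_dotProduct, EuclideanSpace.inner_single_left, EuclideanSpace.single,
      Pi.single_apply] at this
    rw [Matrix.one_apply]
    rw [show (Mᴴ * M) i j = M.col j ⬝ᵥ Mᴴ.row i by rw [Matrix.mul_apply', dotProduct_comm]; rfl]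
    simpa [eq_comm] using this

  refine ⟨Mᴴ, ?_, ?_⟩
  · rw [Matrix.mem_unitaryGroup_iff]
    simpa [Matrix.star_eq_conjTranspose] using hMu
  · calc B = Bᴴᴴ := by simp
    _ = (M * Aᴴ)ᴴ := by rw [hMA]
    _ = A * Mᴴ := by simp [Matrix.conjTranspose_mul]

/-- Unitary freedom of Kraus representations: two families of `r` Kraus operators
representing the same linear map are related by an `r × r` unitary matrix. -/
theorem stmt15 (d_I d_O r : ℕ) (hI : 0 < d_I) (hO : 0 < d_O) (hr : 0 < r)
    (K L : Fin r → Matrix (Fin d_O) (Fin d_I) ℂ)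
    (h : ∀ X : Matrix (Fin d_I) (Fin d_I) ℂ,
        ∑ e : Fin r, K e * X * (K e)ᴴ = ∑ e : Fin r, L e * X * (L e)ᴴ) :
    ∃ u ∈ Matrix.unitaryGroup (Fin r) ℂ,
      ∀ e : Fin r, L e = ∑ f : Fin r, u e f • K f := by
  classical
  let A : Matrix (Fin d_O × Fin d_I) (Fin r) ℂ := Matrix.of fun p e => K e p.1 p.2
  let B : Matrix (Fin d_O × Fin d_I) (Fin r) ℂ := Matrix.of fun p e => L e p.1 p.2
  have hAB : A * Aᴴ = B * Bᴴ := by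
    ext p q
    have hX := Matrix.ext_iff.mpr (h (Matrix.single p.2 q.2 1)) p.1 q.1
    simpa [A, B, Matrix.mul_apply, Matrix.sum_apply, Matrix.conjTranspose_apply,
      Matrix.single, Matrix.of_apply, ite_and, mul_ite, ite_mul, mul_zero, zero_mul,
      Finset.sum_ite_eq, Finset.sum_ite_eq', Finset.mul_sum, Finset.sum_mul, mul_assoc] using hX
  obtain ⟨U, hU, hBU⟩ := key _ A B hAB
  refine ⟨Uᵀ, ?_, ?_⟩
  · rw [Matrix.mem_unitaryGroup_iff]
    have := Matrix.mem_unitaryGroup_iff'.mp hU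
    have hTT : star (Uᵀ) = (star U)ᵀ := by ext i j; simp [Matrix.star_apply]
    rw [hTT, ← Matrix.transpose_mul, this, Matrix.transpose_one]
  · intro e
    ext a b
    have hB := congrFun (congrFun hBU (a, b)) e
    simp only [Matrix.mul_apply] at hB
    simpa [A, B, Matrix.sum_apply, Matrix.transpose_apply, mul_comm] using hB
end
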